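/- arXiv:2209.08965 — 7 statements merged into one kernel-verified Lean document; each statement's English description precedes it below -/
import Mathlib

section
/- Define r₁(λ, r) := (i/(2λ)) (e^{iλr} − 1 − iλr) for λ > 0 and r ≥ 0 (this is the remainder in the expansion (±i/(2λ)) e^{±iλr} = (±i)/(2λ) − r/2 + r₁^{±}(λ, r) of the one-dimensional free resolvent kernel). Then there exist absolute constants C₀, C₁ > 0 such that for every 0 < λ < 1, every r ≥ 0 and k ∈ {0, 1}: |∂_λ^k r₁(λ, r)| ≤ C_k λ^{1/2 − k} r^{3/2}. -/
open Set

lemma aux_exp1 (x : ℝ) (hx : 0 ≤ x) :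
    ‖Complex.exp (Complex.I * x) - 1 - Complex.I * x‖ ≤ 3 * x ^ ((3:ℝ)/2) := by
  have habs : ‖Complex.I * (x:ℂ)‖ = x := by
    simp [abs_of_nonneg hx]
  rcases eq_or_lt_of_le hx with h0 | h0
  · simp [← h0]
  rcases le_or_gt x 1 with hle | hgt
  · have h := Complex.norm_exp_sub_one_sub_id_le (x := Complex.I * x) (by rw [habs]; exact hle)
    rw [habs] at h
    have h2 : (x:ℝ) ^ 2 = x ^ ((2:ℝ)) := by rw [← Real.rpow_natCast x 2]; norm_num
    have h3 : x ^ ((2:ℝ)) ≤ x ^ ((3:ℝ)/2) :=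
      Real.rpow_le_rpow_of_exponent_ge h0 hle (by norm_num)
    calc ‖Complex.exp (Complex.I * x) - 1 - Complex.I * x‖ ≤ x ^ 2 := h
      _ = x ^ ((2:ℝ)) := h2
      _ ≤ x ^ ((3:ℝ)/2) := h3
      _ ≤ 3 * x ^ ((3:ℝ)/2) := by
          have := Real.rpow_nonneg hx ((3:ℝ)/2); linarith
  · have hE : ‖Complex.exp (Complex.I * x)‖ = 1 := by
      rw [Complex.norm_exp]; simp
    have h1 : ‖Complex.exp (Complex.I * x) - 1 - Complex.I * x‖
        ≤ ‖Complex.exp (Complex.I * x)‖ + ‖(1:ℂ)‖ + ‖Complex.I * (x:ℂ)‖ := by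
      calc ‖Complex.exp (Complex.I * x) - 1 - Complex.I * x‖
          ≤ ‖Complex.exp (Complex.I * x) - 1‖ + ‖Complex.I * (x:ℂ)‖ := norm_sub_le _ _
        _ ≤ ‖Complex.exp (Complex.I * x)‖ + ‖(1:ℂ)‖ + ‖Complex.I * (x:ℂ)‖ := by
            have := norm_sub_le (Complex.exp (Complex.I * x)) 1
            linarith
    have hIx : ‖Complex.I * (x:ℂ)‖ = x := habs
    have hx32 : x ≤ x ^ ((3:ℝ)/2) := by
      nth_rewrite 1 [← Real.rpow_one x]
      exact Real.rpow_le_rpow_of_exponent_le hgt.le (by norm_num)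
    have h1' : (1:ℝ) ≤ x ^ ((3:ℝ)/2) := by
      calc (1:ℝ) ≤ x := hgt.le
        _ ≤ x ^ ((3:ℝ)/2) := hx32
    rw [hE, hIx] at h1
    simp only [norm_one] at h1
    linarith

lemma aux_exp2 (x : ℝ) (hx : 0 ≤ x) :
    ‖Complex.exp (Complex.I * x) - 1‖ ≤ 2 * x ^ ((1:ℝ)/2) := by
  have habs : ‖Complex.I * (x:ℂ)‖ = x := by
    simp [abs_of_nonneg hx]
  rcases eq_or_lt_of_le hx with h0 | h0
  · simp [← h0]
  rcases le_or_gt x 1 with hle | hgt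
  · have h := Complex.norm_exp_sub_one_le (x := Complex.I * x) (by rw [habs]; exact hle)
    rw [habs] at h
    have hx12 : x ≤ x ^ ((1:ℝ)/2) := by
      nth_rewrite 1 [← Real.rpow_one x]
      exact Real.rpow_le_rpow_of_exponent_ge h0 hle (by norm_num)
    calc ‖Complex.exp (Complex.I * x) - 1‖ ≤ 2 * x := h
      _ ≤ 2 * x ^ ((1:ℝ)/2) := by linarith
  · have hE : ‖Complex.exp (Complex.I * x)‖ = 1 := by
      rw [Complex.norm_exp]; simp
    have h1 : (1:ℝ) ≤ x ^ ((1:ℝ)/2) := by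
      calc (1:ℝ) = (1:ℝ) ^ ((1:ℝ)/2) := (Real.one_rpow _).symm
        _ ≤ x ^ ((1:ℝ)/2) := Real.rpow_le_rpow zero_le_one hgt.le (by norm_num)
    have := norm_sub_le (Complex.exp (Complex.I * x)) 1
    simp only [hE, norm_one] at this
    linarith

/-- Estimate (2.12) of the paper: the small-`λ` remainder bound for the expansion of the
one-dimensional free resolvent kernel, where
`r₁(λ, r) = (i/(2λ)) (e^{iλr} − 1 − iλr)`. -/
theorem resolvent_remainder_estimate_d1 :
    ∃ C₀ > 0, ∃ C₁ > 0, ∀ lam ∈ Ioo (0:ℝ) 1, ∀ r : ℝ, 0 ≤ r →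
      ‖(Complex.I / (2 * (lam : ℂ))) *
          (Complex.exp (Complex.I * (lam : ℂ) * (r : ℂ)) - 1 -
            Complex.I * (lam : ℂ) * (r : ℂ))‖
        ≤ C₀ * lam ^ ((1:ℝ)/2) * r ^ ((3:ℝ)/2) ∧
      ‖deriv (fun l : ℝ => (Complex.I / (2 * (l : ℂ))) *
          (Complex.exp (Complex.I * (l : ℂ) * (r : ℂ)) - 1 -
            Complex.I * (l : ℂ) * (r : ℂ))) lam‖
        ≤ C₁ * lam ^ (-(1:ℝ)/2) * r ^ ((3:ℝ)/2) := by
  refine ⟨3, by norm_num, 3, by norm_num, ?_⟩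
  rintro lam ⟨hlam0, hlam1⟩ r hr
  set x : ℝ := lam * r with hxdef
  have hx : 0 ≤ x := mul_nonneg hlam0.le hr
  have hlamC : (lam : ℂ) ≠ 0 := by exact_mod_cast hlam0.ne'
  have hcast : Complex.I * (lam : ℂ) * (r : ℂ) = Complex.I * (x : ℂ) := by
    push_cast [hxdef]; ring
  -- rpow facts
  have hx32 : x ^ ((3:ℝ)/2) = lam ^ ((3:ℝ)/2) * r ^ ((3:ℝ)/2) :=
    Real.mul_rpow hlam0.le hr
  have hx12 : x ^ ((1:ℝ)/2) = lam ^ ((1:ℝ)/2) * r ^ ((1:ℝ)/2) :=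
    Real.mul_rpow hlam0.le hr
  have hlam32 : lam ^ ((3:ℝ)/2) = lam * lam ^ ((1:ℝ)/2) := by
    have h : ((3:ℝ)/2) = 1 + (1:ℝ)/2 := by norm_num
    rw [h, Real.rpow_add hlam0, Real.rpow_one]
  have hr32 : r ^ ((3:ℝ)/2) = r * r ^ ((1:ℝ)/2) := by
    rcases eq_or_lt_of_le hr with h0 | h0
    · rw [← h0]; rw [Real.zero_rpow (by norm_num), zero_mul]
    · have h : ((3:ℝ)/2) = 1 + (1:ℝ)/2 := by norm_num
      rw [h, Real.rpow_add h0, Real.rpow_one]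
  have hlamneg : lam ^ (-(1:ℝ)/2) = (lam ^ ((1:ℝ)/2))⁻¹ := by
    rw [show -(1:ℝ)/2 = -((1:ℝ)/2) by ring, Real.rpow_neg hlam0.le]
  have hE1 := aux_exp1 x hx
  have hE2 := aux_exp2 x hx
  have hsq : (lam ^ ((1:ℝ)/2))^2 = lam := by
    rw [← Real.rpow_natCast (lam ^ ((1:ℝ)/2)) 2, ← Real.rpow_mul hlam0.le]
    norm_num
  have hnI : ‖Complex.I / (2 * (lam : ℂ))‖ = 1 / (2 * lam) := by
    rw [norm_div, norm_mul, Complex.norm_I]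
    simp [abs_of_nonneg hlam0.le]
  have hlam12pos : 0 < lam ^ ((1:ℝ)/2) := Real.rpow_pos_of_pos hlam0 _
  have hr32nn : 0 ≤ r ^ ((3:ℝ)/2) := Real.rpow_nonneg hr _
  constructor
  · rw [hcast, norm_mul, hnI]
    calc (1 / (2 * lam)) * ‖Complex.exp (Complex.I * x) - 1 - Complex.I * x‖
        ≤ (1 / (2 * lam)) * (3 * x ^ ((3:ℝ)/2)) := by
          apply mul_le_mul_of_nonneg_left hE1
          positivity
      _ = 3 * lam ^ ((1:ℝ)/2) * r ^ ((3:ℝ)/2) * (1 / 2) := by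
          rw [hx32, hlam32]; field_simp
      _ ≤ 3 * lam ^ ((1:ℝ)/2) * r ^ ((3:ℝ)/2) := by nlinarith [mul_nonneg hlam12pos.le hr32nn]
  · -- derivative computation
    set E : ℂ := Complex.exp (Complex.I * lam * r) with hEdef
    have hne : (2 : ℂ) * lam ≠ 0 := by
      simp [hlamC]
    have hden : HasDerivAt (fun z : ℂ => 2 * z) 2 (lam : ℂ) := by
      simpa using (hasDerivAt_id (lam:ℂ)).const_mul (2:ℂ)
    have h1 : HasDerivAt (fun z : ℂ => Complex.I / (2 * z))
        ((0 * (2 * (lam:ℂ)) - Complex.I * 2) / (2 * (lam:ℂ))^2) (lam : ℂ) :=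
      (hasDerivAt_const (lam:ℂ) Complex.I).div hden hne
    have h2 : HasDerivAt (fun z : ℂ => Complex.exp (Complex.I * z * r) - 1 - Complex.I * z * r)
        (Complex.exp (Complex.I * lam * r) * (Complex.I * 1 * r) - 0 - Complex.I * 1 * r)
        (lam : ℂ) := by
      exact ((((hasDerivAt_id (lam:ℂ)).const_mul Complex.I).mul_const r).cexp.sub
        (hasDerivAt_const _ 1)).sub (((hasDerivAt_id (lam:ℂ)).const_mul Complex.I).mul_const r)
    have hF : HasDerivAt (fun z : ℂ => Complex.I / (2 * z) *
        (Complex.exp (Complex.I * z * r) - 1 - Complex.I * z * r))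
        ((0 * (2 * (lam:ℂ)) - Complex.I * 2) / (2 * (lam:ℂ))^2 *
          (E - 1 - Complex.I * lam * r) +
          Complex.I / (2 * lam) * (Complex.exp (Complex.I * lam * r) * (Complex.I * 1 * r)
            - 0 - Complex.I * 1 * r)) (lam : ℂ) := h1.mul h2
    have hFR := hF.comp_ofReal
    rw [hFR.deriv]
    have hD : (0 * (2 * (lam:ℂ)) - Complex.I * 2) / (2 * (lam:ℂ))^2 *
          (E - 1 - Complex.I * lam * r) +
          Complex.I / (2 * lam) * (Complex.exp (Complex.I * lam * r) * (Complex.I * 1 * r)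
            - 0 - Complex.I * 1 * r)
        = (-Complex.I / (2 * (lam:ℂ)^2)) * (E - 1 - Complex.I * lam * r)
          + (-(r:ℂ) / (2 * lam)) * (E - 1) := by
      rw [hEdef]
      field_simp
      ring_nf
      simp [Complex.I_sq]
    rw [hD]
    have hn1 : ‖(-Complex.I / (2 * (lam:ℂ)^2)) * (E - 1 - Complex.I * lam * r)‖
        ≤ (1 / (2 * lam^2)) * (3 * x ^ ((3:ℝ)/2)) := by
      rw [norm_mul, norm_div, norm_neg, Complex.norm_I]
      have h2l : ‖(2 : ℂ) * (lam:ℂ)^2‖ = 2 * lam^2 := by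
        rw [norm_mul, norm_pow]
        simp [abs_of_nonneg hlam0.le]
      rw [h2l]
      have hEq : E - 1 - Complex.I * lam * r
          = Complex.exp (Complex.I * x) - 1 - Complex.I * x := by
        rw [hEdef, hcast]
      rw [hEq]
      apply mul_le_mul_of_nonneg_left hE1
      positivity
    have hn2 : ‖(-(r:ℂ) / (2 * (lam:ℂ))) * (E - 1)‖
        ≤ (r / (2 * lam)) * (2 * x ^ ((1:ℝ)/2)) := by
      rw [norm_mul, norm_div, norm_neg]
      have hrn : ‖(r:ℂ)‖ = r := by
        simp [abs_of_nonneg hr]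
      have h2l : ‖(2 : ℂ) * (lam:ℂ)‖ = 2 * lam := by
        rw [norm_mul]
        simp [abs_of_nonneg hlam0.le]
      rw [hrn, h2l]
      have hEq : E - 1 = Complex.exp (Complex.I * x) - 1 := by rw [hEdef, hcast]
      rw [hEq]
      apply mul_le_mul_of_nonneg_left hE2
      positivity
    have htri := norm_add_le ((-Complex.I / (2 * (lam:ℂ)^2)) * (E - 1 - Complex.I * lam * r))
      ((-(r:ℂ) / (2 * lam)) * (E - 1))
    have hbound1 : (1 / (2 * lam^2)) * (3 * x ^ ((3:ℝ)/2))
        = (3/2) * lam ^ (-(1:ℝ)/2) * r ^ ((3:ℝ)/2) := by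
      rw [hx32, hlam32, hlamneg]
      field_simp
      ring_nf
      rw [hsq]
      ring
    have hbound2 : (r / (2 * lam)) * (2 * x ^ ((1:ℝ)/2))
        = lam ^ (-(1:ℝ)/2) * r ^ ((3:ℝ)/2) := by
      rw [hx12, hlamneg, hr32]
      field_simp
      ring_nf
      rw [hsq]
      ring
    have hfin : (3/2) * lam ^ (-(1:ℝ)/2) * r ^ ((3:ℝ)/2)
        + lam ^ (-(1:ℝ)/2) * r ^ ((3:ℝ)/2) ≤ 3 * lam ^ (-(1:ℝ)/2) * r ^ ((3:ℝ)/2) := by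
      have hln : 0 < lam ^ (-(1:ℝ)/2) := Real.rpow_pos_of_pos hlam0 _
      nlinarith [mul_nonneg hln.le hr32nn]
    calc ‖_ + _‖ ≤ _ := htri
      _ ≤ (1 / (2 * lam^2)) * (3 * x ^ ((3:ℝ)/2)) + (r / (2 * lam)) * (2 * x ^ ((1:ℝ)/2)) :=
          add_le_add hn1 hn2
      _ = (3/2) * lam ^ (-(1:ℝ)/2) * r ^ ((3:ℝ)/2) + lam ^ (-(1:ℝ)/2) * r ^ ((3:ℝ)/2) := by
          rw [hbound1, hbound2]
      _ ≤ 3 * lam ^ (-(1:ℝ)/2) * r ^ ((3:ℝ)/2) := hfin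
end

section
/- Let φ be a real-valued measurable function on ℝ with |φ(x)| ≤ M⟨x⟩^{−δ} for some M > 0 and δ > 5/2. Then for every λ₀ > 0 and every k ∈ {0, 1} there exists a constant C(k, λ₀) > 0, independent of φ and M, such that the function λ ↦ F^±(λ²) is C¹ on (λ₀, ∞) and |d^k/dλ^k F^±(λ²)| ≤ C(k, λ₀) · M² · λ^{−1} for all λ > λ₀. -/
open MeasureTheory Set

/-- `F^±(λ²) = ⟨R₀^±(λ²)φ, φ⟩` for the one-dimensional free resolvent, whose kernel is
`(±i/(2λ)) e^{±iλ|x−y|}`; the sign `±` is encoded by `σ ∈ {1, -1}`. -/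
noncomputable def resolventFormD1 (σ : ℝ) (φ : ℝ → ℝ) (l : ℝ) : ℂ :=
  ∫ x : ℝ, ∫ y : ℝ,
    ((σ : ℂ) * Complex.I / (2 * (l : ℂ))) *
      Complex.exp ((σ : ℂ) * Complex.I * (l : ℂ) * ((|x - y| : ℝ) : ℂ)) *
      (φ y : ℂ) * (φ x : ℂ)

noncomputable def w52 (x : ℝ) : ℝ := Real.sqrt (1 + x ^ 2) ^ (-(5/2:ℝ))
noncomputable def w32 (x : ℝ) : ℝ := Real.sqrt (1 + x ^ 2) ^ (-(3/2:ℝ))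

lemma one_le_jb (x : ℝ) : 1 ≤ Real.sqrt (1 + x ^ 2) :=
  (Real.le_sqrt one_pos.le (by positivity)).2 (by nlinarith [sq_nonneg x])

lemma w52_nonneg (x : ℝ) : 0 ≤ w52 x := Real.rpow_nonneg (Real.sqrt_nonneg _) _
lemma w32_nonneg (x : ℝ) : 0 ≤ w32 x := Real.rpow_nonneg (Real.sqrt_nonneg _) _

lemma abs_le_jb (x : ℝ) : |x| ≤ Real.sqrt (1 + x ^ 2) := by
  rw [← Real.sqrt_sq_eq_abs]
  exact Real.sqrt_le_sqrt (by nlinarith [sq_nonneg x])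

lemma integrable_jb_rpow {s : ℝ} (hs : 1 < s) :
    Integrable (fun x : ℝ => Real.sqrt (1 + x ^ 2) ^ (-s)) := by
  have h := integrable_rpow_neg_one_add_norm_sq (E := ℝ) (μ := volume) (r := s) (by simpa using hs)
  refine h.congr (Filter.Eventually.of_forall fun x => ?_)
  show (1 + ‖x‖ ^ 2) ^ (-s / 2) = Real.sqrt (1 + x ^ 2) ^ (-s)
  rw [show (1:ℝ) + ‖x‖ ^ 2 = 1 + x ^ 2 by simp [sq_abs], Real.sqrt_eq_rpow,
    ← Real.rpow_mul (by positivity : (0:ℝ) ≤ 1 + x ^ 2)]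
  ring_nf

lemma integrable_w52 : Integrable w52 := integrable_jb_rpow (by norm_num)
lemma integrable_w32 : Integrable w32 := integrable_jb_rpow (by norm_num)

lemma key_ineq (x y : ℝ) : |x - y| * (w52 x * w52 y) ≤ 2 * (w32 x * w32 y) := by
  have ha := one_le_jb x
  have hb := one_le_jb y
  set a := Real.sqrt (1 + x ^ 2) with hA
  set b := Real.sqrt (1 + y ^ 2) with hB
  have hxy : |x - y| ≤ 2 * (a * b) := by
    have h1 := abs_le_jb x
    have h2 := abs_le_jb y
    have habs : |x - y| ≤ |x| + |y| := abs_sub x y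
    nlinarith
  have hkey : ∀ c : ℝ, 1 ≤ c → c * c ^ (-(5/2:ℝ)) = c ^ (-(3/2:ℝ)) := by
    intro c hc
    nth_rewrite 1 [← Real.rpow_one c]
    rw [← Real.rpow_add (by linarith : (0:ℝ) < c)]
    norm_num
  have hx52 : 0 ≤ w52 x := w52_nonneg x
  have hy52 : 0 ≤ w52 y := w52_nonneg y
  calc |x - y| * (w52 x * w52 y) ≤ (2 * (a * b)) * (w52 x * w52 y) := by
        apply mul_le_mul_of_nonneg_right hxy (by positivity)
    _ = 2 * ((a * w52 x) * (b * w52 y)) := by ring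
    _ = 2 * (w32 x * w32 y) := by
        rw [show a * w52 x = w32 x from hkey a ha, show b * w52 y = w32 y from hkey b hb]

noncomputable def eK (σ : ℝ) (φ : ℝ → ℝ) (l : ℝ) (p : ℝ × ℝ) : ℂ :=
  Complex.exp ((σ:ℂ) * Complex.I * (l:ℂ) * ((|p.1 - p.2| : ℝ) : ℂ)) * (φ p.2 : ℂ) * (φ p.1 : ℂ)

noncomputable def eK' (σ : ℝ) (φ : ℝ → ℝ) (l : ℝ) (p : ℝ × ℝ) : ℂ :=
  ((σ:ℂ) * Complex.I * ((|p.1 - p.2| : ℝ) : ℂ)) * eK σ φ l p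

lemma meas_eK (σ : ℝ) {φ : ℝ → ℝ} (hφm : Measurable φ) (l : ℝ) :
    AEStronglyMeasurable (eK σ φ l) ((volume : Measure ℝ).prod volume) := by
  apply Measurable.aestronglyMeasurable
  unfold eK
  fun_prop

lemma meas_eK' (σ : ℝ) {φ : ℝ → ℝ} (hφm : Measurable φ) (l : ℝ) :
    AEStronglyMeasurable (eK' σ φ l) ((volume : Measure ℝ).prod volume) := by
  apply Measurable.aestronglyMeasurable
  unfold eK' eK
  fun_prop

lemma norm_eK (σ : ℝ) (φ : ℝ → ℝ) (l : ℝ) (p : ℝ × ℝ) :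
    ‖eK σ φ l p‖ = |φ p.2| * |φ p.1| := by
  unfold eK
  rw [norm_mul, norm_mul, show (σ:ℂ) * Complex.I * (l:ℂ) * ((|p.1 - p.2| : ℝ) : ℂ)
      = ((σ * l * |p.1 - p.2| : ℝ) : ℂ) * Complex.I by push_cast; ring,
    Complex.norm_exp_ofReal_mul_I, one_mul]
  simp [Real.norm_eq_abs]

lemma norm_eK' {σ : ℝ} (hσ : σ = 1 ∨ σ = -1) (φ : ℝ → ℝ) (l : ℝ) (p : ℝ × ℝ) :
    ‖eK' σ φ l p‖ = |p.1 - p.2| * (|φ p.2| * |φ p.1|) := by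
  unfold eK'
  rw [norm_mul, norm_eK, norm_mul]
  have h1 : ‖(σ:ℂ) * Complex.I‖ = 1 := by rcases hσ with h | h <;> simp [h]
  rw [h1, one_mul, Complex.norm_real, Real.norm_eq_abs, abs_abs]

lemma hasDerivAt_eK (σ : ℝ) (φ : ℝ → ℝ) (l : ℝ) (p : ℝ × ℝ) :
    HasDerivAt (fun t => eK σ φ t p) (eK' σ φ l p) l := by
  have h0 : HasDerivAt (fun t : ℝ => ((t : ℝ) : ℂ)) 1 l := by
    simpa using (hasDerivAt_id l).ofReal_comp
  have h1 : HasDerivAt (fun t : ℝ => (σ:ℂ) * Complex.I * (t:ℂ) * ((|p.1 - p.2| : ℝ) : ℂ))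
      ((σ:ℂ) * Complex.I * ((|p.1 - p.2| : ℝ) : ℂ)) l := by
    have := (h0.const_mul ((σ:ℂ) * Complex.I)).mul_const ((|p.1 - p.2| : ℝ) : ℂ)
    simpa [mul_assoc] using this
  have h2 := (h1.cexp.mul_const ((φ p.2 : ℝ) : ℂ)).mul_const ((φ p.1 : ℝ) : ℂ)
  exact h2.congr_deriv (by unfold eK' eK; ring)

lemma cont_eK' (σ : ℝ) (φ : ℝ → ℝ) (p : ℝ × ℝ) : Continuous fun t : ℝ => eK' σ φ t p := by
  unfold eK' eK
  fun_prop

/-- helper: the coefficient function and its derivative -/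
lemma hasDerivAt_coef (σ : ℝ) {l : ℝ} (hl : 0 < l) :
    HasDerivAt (fun t : ℝ => (σ:ℂ) * Complex.I / (2 * (t:ℂ)))
      ((0 * (2 * (l:ℂ)) - (σ:ℂ) * Complex.I * 2) / (2 * (l:ℂ)) ^ 2) l := by
  have h0 : HasDerivAt (fun t : ℝ => ((t : ℝ) : ℂ)) 1 l := by
    simpa using (hasDerivAt_id l).ofReal_comp
  have hden : HasDerivAt (fun t : ℝ => 2 * (t:ℂ)) 2 l := by
    simpa using h0.const_mul (2:ℂ)
  exact (hasDerivAt_const l ((σ:ℂ) * Complex.I)).div hden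
    (by simp [hl.ne'])

/-- Lemma 2.1 of the paper, case `d = 1`: high-energy derivative bounds for `F^±`. -/
theorem high_energy_F_bounds_d1 (lam₀ : ℝ) (hlam₀ : 0 < lam₀) :
    ∃ C₀ > 0, ∃ C₁ > 0, ∀ σ : ℝ, (σ = 1 ∨ σ = -1) →
      ∀ (φ : ℝ → ℝ) (M δ : ℝ), Measurable φ → 0 < M → 5/2 < δ →
        (∀ x : ℝ, |φ x| ≤ M * Real.sqrt (1 + x ^ 2) ^ (-δ)) →
        ContDiffOn ℝ 1 (resolventFormD1 σ φ) (Ioi lam₀) ∧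
        ∀ l ∈ Ioi lam₀,
          ‖resolventFormD1 σ φ l‖ ≤ C₀ * M ^ 2 * l⁻¹ ∧
          ‖deriv (resolventFormD1 σ φ) l‖ ≤ C₁ * M ^ 2 * l⁻¹ := by
  classical
  set K0 := ∫ x : ℝ, w52 x with hK0def
  set K1 := ∫ x : ℝ, w32 x with hK1def
  have hK0 : 0 ≤ K0 := integral_nonneg w52_nonneg
  have hK1 : 0 ≤ K1 := integral_nonneg w32_nonneg
  refine ⟨K0^2/2 + 1, by positivity, K0^2/(2*lam₀) + K1^2 + 1, by positivity, ?_⟩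
  intro σ hσ φ M δ hφm hM hδ hφδ
  have hφ : ∀ x, |φ x| ≤ M * w52 x := by
    intro x
    refine (hφδ x).trans (mul_le_mul_of_nonneg_left ?_ hM.le)
    exact Real.rpow_le_rpow_of_exponent_le (one_le_jb x) (by linarith)
  have hbe : ∀ (l : ℝ) (p : ℝ × ℝ), ‖eK σ φ l p‖ ≤ (M * w52 p.1) * (M * w52 p.2) := by
    intro l p
    rw [norm_eK]
    calc |φ p.2| * |φ p.1| ≤ (M * w52 p.2) * (M * w52 p.1) :=
          mul_le_mul (hφ p.2) (hφ p.1) (abs_nonneg _) (mul_nonneg hM.le (w52_nonneg _))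
      _ = (M * w52 p.1) * (M * w52 p.2) := by ring
  have hbd0 : Integrable (fun p : ℝ × ℝ => (M * w52 p.1) * (M * w52 p.2))
      ((volume : Measure ℝ).prod volume) :=
    (integrable_w52.const_mul M).mul_prod (integrable_w52.const_mul M)
  have hie : ∀ l : ℝ, Integrable (eK σ φ l) ((volume : Measure ℝ).prod volume) :=
    fun l => hbd0.mono' (meas_eK σ hφm l) (ae_of_all _ (hbe l))
  have hbe' : ∀ (l : ℝ) (p : ℝ × ℝ), ‖eK' σ φ l p‖ ≤ 2 * M^2 * (w32 p.1 * w32 p.2) := by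
    intro l p
    rw [norm_eK' hσ]
    calc |p.1 - p.2| * (|φ p.2| * |φ p.1|)
        ≤ |p.1 - p.2| * ((M * w52 p.2) * (M * w52 p.1)) :=
          mul_le_mul_of_nonneg_left
            (mul_le_mul (hφ p.2) (hφ p.1) (abs_nonneg _) (mul_nonneg hM.le (w52_nonneg _)))
            (abs_nonneg _)
      _ = M^2 * (|p.1 - p.2| * (w52 p.1 * w52 p.2)) := by ring
      _ ≤ M^2 * (2 * (w32 p.1 * w32 p.2)) :=
          mul_le_mul_of_nonneg_left (key_ineq p.1 p.2) (by positivity)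
      _ = 2 * M^2 * (w32 p.1 * w32 p.2) := by ring
  have hbd1 : Integrable (fun p : ℝ × ℝ => 2 * M^2 * (w32 p.1 * w32 p.2))
      ((volume : Measure ℝ).prod volume) :=
    (integrable_w32.mul_prod integrable_w32).const_mul (2 * M^2)
  set G : ℝ → ℂ := fun l => ∫ p : ℝ × ℝ, eK σ φ l p ∂((volume : Measure ℝ).prod volume)
    with hGdef
  set G' : ℝ → ℂ := fun l => ∫ p : ℝ × ℝ, eK' σ φ l p ∂((volume : Measure ℝ).prod volume)
    with hG'def
  have hGderiv : ∀ l : ℝ, HasDerivAt G (G' l) l := by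
    intro l
    have h := hasDerivAt_integral_of_dominated_loc_of_deriv_le (𝕜 := ℝ)
      (F := fun t p => eK σ φ t p) (F' := fun t p => eK' σ φ t p)
      (bound := fun p : ℝ × ℝ => 2 * M^2 * (w32 p.1 * w32 p.2))
      (Metric.ball_mem_nhds l one_pos) (Filter.Eventually.of_forall fun t => meas_eK σ hφm t) (hie l)
      (meas_eK' σ hφm l) (ae_of_all _ fun p t _ => hbe' t p) hbd1
      (ae_of_all _ fun p t _ => hasDerivAt_eK σ φ t p)
    exact h.2
  have hGcont : Continuous G := continuous_iff_continuousAt.2 fun l => (hGderiv l).continuousAt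
  have hG'cont : Continuous G' := by
    refine continuous_of_dominated (fun t => meas_eK' σ hφm t)
      (fun t => ae_of_all _ (hbe' t)) hbd1 (ae_of_all _ fun p => cont_eK' σ φ p)
  have hFeq : ∀ l : ℝ, resolventFormD1 σ φ l = ((σ:ℂ) * Complex.I / (2 * (l:ℂ))) * G l := by
    intro l
    rw [resolventFormD1, hGdef]
    have h1 : ∀ x y : ℝ, ((σ:ℂ) * Complex.I / (2*(l:ℂ))) *
        Complex.exp ((σ:ℂ) * Complex.I * (l:ℂ) * ((|x-y|:ℝ):ℂ)) * (φ y:ℂ) * (φ x:ℂ)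
        = ((σ:ℂ) * Complex.I / (2*(l:ℂ))) * eK σ φ l (x, y) := by
      intro x y; simp only [eK]; ring
    simp only [h1, integral_const_mul]
    congr 1
    exact (MeasureTheory.integral_integral (f := fun x y => eK σ φ l (x, y)) (hie l)).trans rfl
  have hres : resolventFormD1 σ φ = fun l : ℝ => ((σ:ℂ) * Complex.I / (2 * (l:ℂ))) * G l :=
    funext hFeq
  have hFd : ∀ l : ℝ, 0 < l →
      HasDerivAt (fun t : ℝ => ((σ:ℂ) * Complex.I / (2 * (t:ℂ))) * G t)
        (((0 * (2*(l:ℂ)) - (σ:ℂ)*Complex.I*2) / (2*(l:ℂ))^2) * G l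
          + ((σ:ℂ) * Complex.I / (2 * (l:ℂ))) * G' l) l :=
    fun l hl => (hasDerivAt_coef σ hl).mul (hGderiv l)
  have hσn : ‖(σ:ℂ) * Complex.I‖ = 1 := by rcases hσ with h | h <;> simp [h]
  have hGle : ∀ l : ℝ, ‖G l‖ ≤ M^2 * K0^2 := by
    intro l
    have h := norm_integral_le_of_norm_le hbd0 (ae_of_all _ (hbe l))
    refine h.trans (le_of_eq ?_)
    rw [MeasureTheory.integral_prod_mul (fun x : ℝ => M * w52 x) (fun y : ℝ => M * w52 y)]
    simp only [integral_const_mul]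
    ring
  have hG'le : ∀ l : ℝ, ‖G' l‖ ≤ 2 * M^2 * K1^2 := by
    intro l
    have h := norm_integral_le_of_norm_le hbd1 (ae_of_all _ (hbe' l))
    refine h.trans (le_of_eq ?_)
    rw [MeasureTheory.integral_const_mul,
      MeasureTheory.integral_prod_mul (fun x : ℝ => w32 x) (fun y : ℝ => w32 y)]
    ring
  have h2l : ∀ l : ℝ, 0 < l → ‖2*(l:ℂ)‖ = 2*l := by
    intro l hl
    rw [norm_mul, Complex.norm_real, Real.norm_eq_abs, abs_of_pos hl]
    norm_num
  have hDnorm : ∀ l : ℝ, 0 < l →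
      ‖(0 * (2*(l:ℂ)) - (σ:ℂ)*Complex.I*2) / (2*(l:ℂ))^2‖ = 1/(2*l^2) := by
    intro l hl
    rw [show (0:ℂ) * (2*(l:ℂ)) - (σ:ℂ)*Complex.I*2 = -((σ:ℂ)*Complex.I*2) by ring,
      norm_div, norm_neg, norm_mul, hσn, one_mul, norm_pow, h2l l hl]
    have h2 : ‖(2:ℂ)‖ = 2 := by norm_num
    rw [h2]
    field_simp
  have hCnorm : ∀ l : ℝ, 0 < l → ‖(σ:ℂ) * Complex.I / (2 * (l:ℂ))‖ = 1/(2*l) := by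
    intro l hl
    rw [norm_div, hσn, h2l l hl]
  constructor
  · -- ContDiffOn
    rw [hres]
    have h01 : (1 : WithTop ℕ∞) = 0 + 1 := by norm_num
    rw [h01]
    refine (contDiffOn_succ_iff_deriv_of_isOpen isOpen_Ioi).2 ⟨?_, by simp, ?_⟩
    · exact fun l hl => ((hFd l (hlam₀.trans hl)).differentiableAt).differentiableWithinAt
    · rw [contDiffOn_zero]
      have hEq : EqOn (deriv (fun t : ℝ => ((σ:ℂ) * Complex.I / (2 * (t:ℂ))) * G t))
          (fun l : ℝ => ((0 * (2*(l:ℂ)) - (σ:ℂ)*Complex.I*2) / (2*(l:ℂ))^2) * G l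
            + ((σ:ℂ) * Complex.I / (2 * (l:ℂ))) * G' l) (Ioi lam₀) :=
        fun l hl => (hFd l (hlam₀.trans hl)).deriv
      refine ContinuousOn.congr ?_ hEq
      have hc2l : Continuous fun l : ℝ => 2 * (l:ℂ) := by fun_prop
      have hne : ∀ l ∈ Ioi lam₀, (2 * (l:ℂ)) ≠ 0 := by
        intro l hl
        simp only [mul_ne_zero_iff, Complex.ofReal_ne_zero]
        exact ⟨two_ne_zero, (hlam₀.trans hl).ne'⟩
      apply ContinuousOn.add
      · refine ContinuousOn.mul ?_ hGcont.continuousOn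
        refine ContinuousOn.div (by fun_prop) (hc2l.pow 2).continuousOn ?_
        exact fun l hl => pow_ne_zero 2 (hne l hl)
      · refine ContinuousOn.mul ?_ hG'cont.continuousOn
        exact ContinuousOn.div continuousOn_const hc2l.continuousOn hne
  · intro l hl
    have hl0 : 0 < l := hlam₀.trans hl
    have hMl : (0:ℝ) ≤ M^2 * l⁻¹ := by positivity
    constructor
    · rw [hFeq l, norm_mul, hCnorm l hl0]
      calc 1/(2*l) * ‖G l‖ ≤ 1/(2*l) * (M^2*K0^2) :=
            mul_le_mul_of_nonneg_left (hGle l) (by positivity)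
        _ = (K0^2/2) * M^2 * l⁻¹ := by field_simp
        _ ≤ (K0^2/2 + 1) * M^2 * l⁻¹ := by nlinarith
    · rw [hres, (hFd l hl0).deriv]
      refine (norm_add_le _ _).trans ?_
      rw [norm_mul, norm_mul, hDnorm l hl0, hCnorm l hl0]
      have hll : l⁻¹ ≤ lam₀⁻¹ := by
        apply inv_anti₀ hlam₀ hl.le
      calc 1/(2*l^2) * ‖G l‖ + 1/(2*l) * ‖G' l‖
          ≤ 1/(2*l^2) * (M^2*K0^2) + 1/(2*l) * (2*M^2*K1^2) :=
            add_le_add (mul_le_mul_of_nonneg_left (hGle l) (by positivity))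
              (mul_le_mul_of_nonneg_left (hG'le l) (by positivity))
        _ ≤ (K0^2/(2*lam₀) + K1^2 + 1) * M^2 * l⁻¹ := by
            have e1 : 1/(2*l) * (2*M^2*K1^2) = K1^2 * M^2 * l⁻¹ := by field_simp
            have e2 : 1/(2*l^2) * (M^2*K0^2) = (K0^2/2) * M^2 * (l⁻¹ * l⁻¹) := by
              field_simp
            have h3 : (K0^2/2) * M^2 * (l⁻¹*l⁻¹) ≤ (K0^2/(2*lam₀)) * M^2 * l⁻¹ := by
              have hstep : K0^2/2 * l⁻¹ ≤ K0^2/(2*lam₀) := by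
                calc K0^2/2 * l⁻¹ ≤ K0^2/2 * lam₀⁻¹ :=
                      mul_le_mul_of_nonneg_left hll (by positivity)
                  _ = K0^2/(2*lam₀) := by field_simp
              calc (K0^2/2) * M^2 * (l⁻¹*l⁻¹) = (K0^2/2 * l⁻¹) * (M^2 * l⁻¹) := by ring
                _ ≤ (K0^2/(2*lam₀)) * (M^2 * l⁻¹) :=
                    mul_le_mul_of_nonneg_right hstep (by positivity)
                _ = (K0^2/(2*lam₀)) * M^2 * l⁻¹ := by ring
            rw [e2, e1]
            nlinarith
end

section
/- Let φ be a real-valued measurable function on ℝ with |φ(x)| ≤ M⟨x⟩^{−δ} for some M > 0 and δ > 5/2, and assume ∫_ℝ φ(x) dx ≠ 0. Then there exist a constant λ₀ ∈ (0, 1) and constants 0 < C₁ < C₂ (all depending on φ) such that for every 0 < λ < λ₀: C₁/λ ≤ |Im F^±(λ²)| ≤ C₂/λ. -/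
open MeasureTheory Set

lemma integrable_decay (r : ℝ) (hr : 1 < r) :
    Integrable (fun x : ℝ => Real.sqrt (1 + x^2) ^ (-r)) := by
  have h := integrable_rpow_neg_one_add_norm_sq (E := ℝ) (μ := volume) (r := r)
    (by simpa using hr)
  refine h.congr (Filter.Eventually.of_forall fun x => ?_)
  have h0 : (0:ℝ) ≤ 1 + x ^ 2 := by positivity
  simp only [Real.norm_eq_abs, sq_abs]
  rw [Real.sqrt_eq_rpow, ← Real.rpow_mul h0]
  congr 1; ring

lemma im_term (s l r a b : ℝ) :
    ((s : ℂ) * Complex.I / (2 * (l:ℂ)) *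
      Complex.exp ((s:ℂ) * Complex.I * (l:ℂ) * (r:ℂ)) * (a:ℂ) * (b:ℂ)).im
    = s / (2*l) * Real.cos (s*(l*r)) * a * b := by
  have h : (s:ℂ) * Complex.I * (l:ℂ) * (r:ℂ) = ((s*(l*r) : ℝ):ℂ) * Complex.I := by
    push_cast; ring
  rw [h, Complex.exp_mul_I, ← Complex.ofReal_cos, ← Complex.ofReal_sin]
  have key : (s : ℂ) * Complex.I / (2 * (l:ℂ)) *
      ((Real.cos (s*(l*r)) : ℂ) + (Real.sin (s*(l*r)) : ℂ) * Complex.I) * (a:ℂ) * (b:ℂ)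
      = ((-(s / (2*l) * Real.sin (s*(l*r)) * a * b) : ℝ) : ℂ)
        + ((s / (2*l) * Real.cos (s*(l*r)) * a * b : ℝ) : ℂ) * Complex.I := by
    push_cast
    ring_nf
    simp [Complex.I_sq]
    ring
  rw [key]
  simp only [Complex.add_im, Complex.ofReal_im, Complex.mul_I_im, Complex.ofReal_re, zero_add]

lemma abs_cos_sub_one_le (t : ℝ) : |Real.cos t - 1| ≤ |t| := by
  have h := Real.cos_sub_cos t 0
  have h1 : Real.cos t - 1 = -2 * Real.sin (t/2) * Real.sin (t/2) := by
    simpa using h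
  have hs1 : |Real.sin (t/2)| ≤ 1 :=
    abs_le.2 ⟨Real.neg_one_le_sin _, Real.sin_le_one _⟩
  have hsd : |Real.sin (t/2)| ≤ |t|/2 := by
    have := Real.abs_sin_le_abs (x := t/2)
    rwa [abs_div, abs_two] at this
  have h2 : |(-2 : ℝ) * Real.sin (t/2) * Real.sin (t/2)|
      = 2 * |Real.sin (t/2)| * |Real.sin (t/2)| := by
    rw [abs_mul, abs_mul]; norm_num
  rw [h1, h2]
  nlinarith [abs_nonneg (Real.sin (t/2)), abs_nonneg t]

lemma key_bound (φ : ℝ → ℝ) (hφ : Measurable φ)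
    (hφint : Integrable φ) (hwφ : Integrable (fun x => |x| * |φ x|))
    (l : ℝ) (hl : 0 < l) :
    |(∫ p : ℝ × ℝ, Real.cos (l * |p.1 - p.2|) * φ p.2 * φ p.1 ∂(volume.prod volume))
      - (∫ x : ℝ, φ x) * (∫ x : ℝ, φ x)|
    ≤ l * (2 * (∫ x : ℝ, |φ x|) * (∫ x : ℝ, |x| * |φ x|)) := by
  have hφabs : Integrable (fun x : ℝ => |φ x|) := hφint.abs
  have m_g : AEStronglyMeasurable
      (fun p : ℝ × ℝ => Real.cos (l * |p.1 - p.2|) * φ p.2 * φ p.1)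
      (volume.prod volume) := by
    apply Measurable.aestronglyMeasurable
    exact ((Real.measurable_cos.comp
        (measurable_const.mul ((measurable_fst.sub measurable_snd).abs))).mul
        (hφ.comp measurable_snd)).mul (hφ.comp measurable_fst)
  have hg_int : Integrable
      (fun p : ℝ × ℝ => Real.cos (l * |p.1 - p.2|) * φ p.2 * φ p.1)
      (volume.prod volume) := by
    refine (hφabs.mul_prod hφabs).mono' m_g
      (Filter.Eventually.of_forall fun p => ?_)
    have hc : |Real.cos (l * |p.1 - p.2|)| ≤ 1 := Real.abs_cos_le_one _
    rw [Real.norm_eq_abs, abs_mul, abs_mul]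
    have := mul_le_mul_of_nonneg_right
      (mul_le_mul_of_nonneg_right hc (abs_nonneg (φ p.2))) (abs_nonneg (φ p.1))
    nlinarith [abs_nonneg (φ p.1), abs_nonneg (φ p.2)]
  have hff_eq : (fun p : ℝ × ℝ => φ p.2 * φ p.1) = fun p : ℝ × ℝ => φ p.1 * φ p.2 :=
    funext fun p => mul_comm _ _
  have hff_int : Integrable (fun p : ℝ × ℝ => φ p.2 * φ p.1) (volume.prod volume) := by
    rw [hff_eq]; exact hφint.mul_prod hφint
  have hff_val : (∫ p : ℝ × ℝ, φ p.2 * φ p.1 ∂(volume.prod volume))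
      = (∫ x : ℝ, φ x) * (∫ x : ℝ, φ x) := by
    rw [hff_eq]; exact integral_prod_mul φ φ
  have hbound_int : Integrable
      (fun p : ℝ × ℝ => l * (|p.1| * |φ p.1| * |φ p.2| + |φ p.1| * (|p.2| * |φ p.2|)))
      (volume.prod volume) := by
    exact ((hwφ.mul_prod hφabs).add (hφabs.mul_prod hwφ)).const_mul l
  have step1 : (∫ p : ℝ × ℝ, Real.cos (l * |p.1 - p.2|) * φ p.2 * φ p.1 ∂(volume.prod volume))
      - (∫ x : ℝ, φ x) * (∫ x : ℝ, φ x)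
      = ∫ p : ℝ × ℝ, (Real.cos (l * |p.1 - p.2|) * φ p.2 * φ p.1 - φ p.2 * φ p.1)
          ∂(volume.prod volume) := by
    rw [integral_sub hg_int hff_int, hff_val]
  rw [step1]
  have step2 : |∫ p : ℝ × ℝ, (Real.cos (l * |p.1 - p.2|) * φ p.2 * φ p.1 - φ p.2 * φ p.1)
          ∂(volume.prod volume)|
      ≤ ∫ p : ℝ × ℝ, l * (|p.1| * |φ p.1| * |φ p.2| + |φ p.1| * (|p.2| * |φ p.2|))
          ∂(volume.prod volume) := by
    rw [← Real.norm_eq_abs]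
    refine norm_integral_le_of_norm_le hbound_int
      (Filter.Eventually.of_forall fun p => ?_)
    have hr0 : (0:ℝ) ≤ |p.1 - p.2| := abs_nonneg _
    have hr : |Real.cos (l * |p.1 - p.2|) - 1| ≤ l * (|p.1| + |p.2|) := by
      have h1 := abs_cos_sub_one_le (l * |p.1 - p.2|)
      rw [abs_of_nonneg (by positivity : (0:ℝ) ≤ l * |p.1 - p.2|)] at h1
      have h2 : |p.1 - p.2| ≤ |p.1| + |p.2| := abs_sub p.1 p.2
      nlinarith
    have heq : Real.cos (l * |p.1 - p.2|) * φ p.2 * φ p.1 - φ p.2 * φ p.1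
        = (Real.cos (l * |p.1 - p.2|) - 1) * (φ p.2 * φ p.1) := by ring
    rw [Real.norm_eq_abs, heq, abs_mul, abs_mul]
    have h3 := mul_le_mul_of_nonneg_right hr
      (mul_nonneg (abs_nonneg (φ p.2)) (abs_nonneg (φ p.1)))
    nlinarith [abs_nonneg (φ p.1), abs_nonneg (φ p.2), abs_nonneg p.1, abs_nonneg p.2]
  refine step2.trans (le_of_eq ?_)
  rw [integral_const_mul]
  rw [integral_add (hwφ.mul_prod hφabs) (hφabs.mul_prod hwφ)]
  rw [integral_prod_mul (fun x : ℝ => |x| * |φ x|) (fun y : ℝ => |φ y|),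
    integral_prod_mul (fun x : ℝ => |φ x|) (fun y : ℝ => |y| * |φ y|)]
  ring

lemma resolvent_im (φ : ℝ → ℝ) (hφ : Measurable φ) (hφint : Integrable φ)
    (σ : ℝ) (hσ : σ = 1 ∨ σ = -1) (l : ℝ) (hl : 0 < l) :
    (resolventFormD1 σ φ l).im
      = σ / (2*l) * ∫ p : ℝ × ℝ, Real.cos (l * |p.1 - p.2|) * φ p.2 * φ p.1
          ∂(volume.prod volume) := by
  have hφabs : Integrable (fun x : ℝ => |φ x|) := hφint.abs
  set c : ℝ × ℝ → ℂ := fun p =>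
    ((σ : ℂ) * Complex.I / (2 * (l : ℂ))) *
      Complex.exp ((σ : ℂ) * Complex.I * (l : ℂ) * ((|p.1 - p.2| : ℝ) : ℂ)) *
      (φ p.2 : ℂ) * (φ p.1 : ℂ) with hc
  have hσ1 : |σ| = 1 := by rcases hσ with h|h <;> simp [h]
  have m1 : Measurable fun p : ℝ × ℝ => ((|p.1 - p.2| : ℝ) : ℂ) :=
    Complex.measurable_ofReal.comp ((measurable_fst.sub measurable_snd).abs)
  have mc : Measurable c :=
    ((measurable_const.mul (Complex.measurable_exp.comp (measurable_const.mul m1))).mul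
      (Complex.measurable_ofReal.comp (hφ.comp measurable_snd))).mul
      (Complex.measurable_ofReal.comp (hφ.comp measurable_fst))
  have hnorm : ∀ p : ℝ × ℝ, ‖c p‖ ≤ (2*l)⁻¹ * (|φ p.1| * |φ p.2|) := fun p => by
    have harg : (σ:ℂ) * Complex.I * (l:ℂ) * ((|p.1 - p.2| : ℝ):ℂ)
        = ((σ*(l*|p.1 - p.2|) : ℝ):ℂ) * Complex.I := by push_cast; ring
    rw [hc]
    simp only [harg]
    rw [norm_mul, norm_mul, norm_mul, norm_div, norm_mul,
      Complex.norm_exp_ofReal_mul_I]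
    simp only [Complex.norm_real, Complex.norm_I, Real.norm_eq_abs, hσ1, one_mul, mul_one]
    have h2l : ‖(2 : ℂ) * (l:ℂ)‖ = 2 * l := by
      rw [norm_mul, Complex.norm_real, Real.norm_eq_abs, abs_of_pos hl]
      simp
    rw [h2l]
    exact le_of_eq (by ring)
  have hcint : Integrable c (volume.prod volume) :=
    ((hφabs.mul_prod hφabs).const_mul ((2*l)⁻¹)).mono' mc.aestronglyMeasurable
      (Filter.Eventually.of_forall hnorm)
  have hres : resolventFormD1 σ φ l = ∫ p : ℝ × ℝ, c p ∂(volume.prod volume) := by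
    rw [resolventFormD1]
    exact integral_integral hcint
  have him := integral_im (𝕜 := ℂ) hcint
  simp only [RCLike.im_to_complex] at him
  rw [hres, ← him]
  have hpt : ∀ p : ℝ × ℝ, (c p).im
      = σ / (2*l) * (Real.cos (l * |p.1 - p.2|) * φ p.2 * φ p.1) := fun p => by
    rw [hc]
    have h1 := im_term σ l (|p.1 - p.2|) (φ p.2) (φ p.1)
    have h2 : Real.cos (σ * (l * |p.1 - p.2|)) = Real.cos (l * |p.1 - p.2|) := by
      rcases hσ with h|h <;> subst h <;> simp [Real.cos_neg]
    rw [h1, h2]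
    ring
  simp only [hpt]
  rw [integral_const_mul]

/-- Lemma 2.2 (i) of the paper, case `d = 1`: two-sided low-energy bounds for `Im F^±`
when `∫ φ ≠ 0`. -/
theorem low_energy_ImF_two_sided_d1 (φ : ℝ → ℝ) (M δ : ℝ) (hφ : Measurable φ)
    (hM : 0 < M) (hδ : 5/2 < δ)
    (hdecay : ∀ x : ℝ, |φ x| ≤ M * Real.sqrt (1 + x ^ 2) ^ (-δ))
    (hmean : (∫ x : ℝ, φ x) ≠ 0) :
    ∃ lam₀ ∈ Ioo (0:ℝ) 1, ∃ C₁ C₂ : ℝ, 0 < C₁ ∧ C₁ < C₂ ∧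
      ∀ σ : ℝ, (σ = 1 ∨ σ = -1) → ∀ l ∈ Ioo (0:ℝ) lam₀,
        C₁ / l ≤ |(resolventFormD1 σ φ l).im| ∧
        |(resolventFormD1 σ φ l).im| ≤ C₂ / l := by
  have hδ1 : (1:ℝ) < δ := by linarith
  have hδ2 : (1:ℝ) < δ - 1 := by linarith
  have hsq : ∀ x : ℝ, 0 < Real.sqrt (1 + x ^ 2) := fun x => Real.sqrt_pos.2 (by positivity)
  have hφint : Integrable φ := by
    refine ((integrable_decay δ hδ1).const_mul M).mono' hφ.aestronglyMeasurable
      (Filter.Eventually.of_forall fun x => ?_)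
    simpa [Real.norm_eq_abs] using hdecay x
  have hwφ : Integrable (fun x : ℝ => |x| * |φ x|) := by
    refine ((integrable_decay (δ-1) hδ2).const_mul M).mono'
      ((measurable_id.abs.mul hφ.abs).aestronglyMeasurable)
      (Filter.Eventually.of_forall fun x => ?_)
    have h1 : |x| ≤ Real.sqrt (1 + x ^ 2) := by
      rw [← Real.sqrt_sq_eq_abs]
      exact Real.sqrt_le_sqrt (by nlinarith)
    have h2 : |x| * |φ x| ≤ Real.sqrt (1+x^2) * (M * Real.sqrt (1+x^2) ^ (-δ)) :=
      mul_le_mul h1 (hdecay x) (abs_nonneg _) (Real.sqrt_nonneg _)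
    have h3 : Real.sqrt (1+x^2) * (M * Real.sqrt (1+x^2) ^ (-δ))
        = M * Real.sqrt (1+x^2) ^ (-(δ-1)) := by
      rw [show -(δ-1) = 1 + -δ by ring, Real.rpow_add (hsq x), Real.rpow_one]
      ring
    rw [Real.norm_eq_abs, abs_of_nonneg (by positivity)]
    rw [h3] at h2
    exact h2
  set A := ∫ x : ℝ, φ x with hA
  set A₀ := ∫ x : ℝ, |φ x| with hA0
  set A₁ := ∫ x : ℝ, |x| * |φ x| with hA1
  have hA0n : (0:ℝ) ≤ A₀ := integral_nonneg fun x => abs_nonneg _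
  have hA1n : (0:ℝ) ≤ A₁ := integral_nonneg fun x => mul_nonneg (abs_nonneg _) (abs_nonneg _)
  have hA2 : 0 < A * A := by
    rcases hmean.lt_or_gt with h|h
    · nlinarith
    · nlinarith
  have hQpos : (0:ℝ) < A*A/(4*(2*A₀*A₁+1)) := div_pos hA2 (by positivity)
  refine ⟨min (1/2) (A*A/(4*(2*A₀*A₁+1))),
    ⟨lt_min (by norm_num) hQpos, lt_of_le_of_lt (min_le_left _ _) (by norm_num)⟩,
    A*A/4, A*A, by linarith, by linarith, ?_⟩
  intro σ hσ l hlmem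
  obtain ⟨hl0, hlu⟩ := hlmem
  have hσ1 : |σ| = 1 := by rcases hσ with h|h <;> simp [h]
  set G := ∫ p : ℝ × ℝ, Real.cos (l * |p.1 - p.2|) * φ p.2 * φ p.1 ∂(volume.prod volume)
    with hG
  have hkey : |G - A*A| ≤ l * (2*A₀*A₁) := key_bound φ hφ hφint hwφ l hl0
  have hlD : l * (2*A₀*A₁) ≤ A*A/4 := by
    have h1 : l ≤ A*A/(4*(2*A₀*A₁+1)) := le_of_lt (lt_of_lt_of_le hlu (min_le_right _ _))
    have e : A*A/(4*(2*A₀*A₁+1)) * (2*A₀*A₁+1) = A*A/4 := by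
      field_simp
    nlinarith [mul_nonneg hA0n hA1n, hQpos]
  have habs2 : |A*A| = A*A := abs_of_pos hA2
  have hGlb : A*A/2 ≤ |G| := by
    have h3 := abs_sub_abs_le_abs_sub (A*A) G
    rw [abs_sub_comm] at h3
    linarith [hkey.trans hlD]
  have hGub : |G| ≤ 2*(A*A) := by
    have h3 := abs_sub_abs_le_abs_sub G (A*A)
    linarith [hkey.trans hlD]
  rw [resolvent_im φ hφ hφint σ hσ l hl0, ← hG]
  have habs : |σ / (2*l) * G| = |G| / (2*l) := by
    rw [abs_mul, abs_div, hσ1, abs_of_pos (by linarith : (0:ℝ) < 2*l)]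
    ring
  rw [habs]
  constructor
  · rw [div_le_div_iff₀ hl0 (by linarith : (0:ℝ) < 2*l)]
    nlinarith
  · rw [div_le_div_iff₀ (by linarith : (0:ℝ) < 2*l) hl0]
    nlinarith
end

section
/- Let φ be a real-valued measurable function on ℝ with |φ(x)| ≤ M⟨x⟩^{−δ} for some M > 0 and δ > 5/2. Then there exist absolute constants C₀, C₁ > 0, independent of φ and M, such that the function λ ↦ F^±(λ²) is C¹ on (0, 1/2) and for every 0 < λ < 1/2 and k ∈ {0, 1}: |d^k/dλ^k F^±(λ²)| ≤ C_k M² λ^{−1−k}; moreover, if in addition ∫_ℝ φ(x) dx = 0, then |d^k/dλ^k F^±(λ²)| ≤ C_k M² for k ∈ {0, 1} and 0 < λ < 1/2. -/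
open MeasureTheory Set

open MeasureTheory Set Complex

noncomputable def jb (x : ℝ) : ℝ := Real.sqrt (1 + x ^ 2)

lemma jb_pos (x : ℝ) : 0 < jb x := Real.sqrt_pos.2 (by positivity)

lemma one_le_jb_s11 (x : ℝ) : 1 ≤ jb x := by
  rw [show (1:ℝ) = Real.sqrt 1 by simp]
  exact Real.sqrt_le_sqrt (by nlinarith [sq_nonneg x])

lemma abs_le_jb_s11 (x : ℝ) : |x| ≤ jb x := by
  rw [show |x| = Real.sqrt (x^2) by rw [Real.sqrt_sq_eq_abs]]
  exact Real.sqrt_le_sqrt (by nlinarith)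

lemma integrable_jb : Integrable (fun x : ℝ => jb x ^ (-(3/2):ℝ)) := by
  have h := integrable_rpow_neg_one_add_norm_sq (E := ℝ) (μ := volume) (r := 3/2)
    (by simp; norm_num)
  refine h.congr (Filter.Eventually.of_forall fun x => ?_)
  show (1 + ‖x‖ ^ 2) ^ (-(3/2)/2 : ℝ) = jb x ^ (-(3/2):ℝ)
  unfold jb
  rw [Real.norm_eq_abs, _root_.sq_abs, Real.sqrt_eq_rpow, ← Real.rpow_mul (by positivity)]
  norm_num

noncomputable def psiC : ℝ := ∫ x : ℝ, jb x ^ (-(3/2) : ℝ)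

lemma psiC_nonneg : 0 ≤ psiC :=
  integral_nonneg fun x => Real.rpow_nonneg (jb_pos x).le _

lemma cast_exp (σ l a : ℝ) : (σ:ℂ) * Complex.I * l * a = ((σ * l * a : ℝ) : ℂ) * Complex.I := by
  push_cast; ring

lemma norm_exp_form (σ l a : ℝ) : ‖Complex.exp ((σ:ℂ)*Complex.I*l*a)‖ = 1 := by
  rw [cast_exp, Complex.norm_exp_ofReal_mul_I]

lemma hasDerivAt_exp_I (w : ℂ) :
    HasDerivAt (fun w : ℂ => Complex.exp (w * I)) (Complex.exp (w * I) * I) w := by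
  have h := ((hasDerivAt_id w).mul_const I).cexp
  simpa using h

lemma mvt1 (t : ℝ) : ‖Complex.exp (t * I) - 1‖ ≤ |t| := by
  have key : ∀ s : ℝ, s ∈ (univ : Set ℝ) →
      HasDerivWithinAt (fun s : ℝ => Complex.exp ((s:ℂ) * I))
        (Complex.exp ((s:ℂ) * I) * I) univ s := by
    intro s _
    exact ((hasDerivAt_exp_I (s:ℂ)).comp_ofReal).hasDerivWithinAt
  have hb : ∀ s : ℝ, s ∈ (univ : Set ℝ) → ‖Complex.exp ((s:ℂ) * I) * I‖ ≤ 1 := by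
    intro s _
    rw [norm_mul, Complex.norm_exp_ofReal_mul_I]
    simp
  have h := convex_univ.norm_image_sub_le_of_norm_hasDerivWithin_le key hb
    (mem_univ (0:ℝ)) (mem_univ t)
  simpa using h

lemma norm_exp_sub_exp (u v : ℝ) :
    ‖Complex.exp ((u:ℂ) * I) - Complex.exp ((v:ℂ) * I)‖ ≤ |u - v| := by
  have heq : Complex.exp ((u:ℂ)*I) - Complex.exp ((v:ℂ)*I)
      = Complex.exp ((v:ℂ)*I) * (Complex.exp (((u - v : ℝ):ℂ)*I) - 1) := by
    rw [mul_sub, ← Complex.exp_add, mul_one]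
    push_cast
    ring_nf
  rw [heq, norm_mul, Complex.norm_exp_ofReal_mul_I, one_mul]
  exact mvt1 _

lemma hasDerivAt_f0 (s : ℝ) :
    HasDerivAt (fun s : ℝ => Complex.I * (s:ℂ) * Complex.exp ((s:ℂ)*I) - Complex.exp ((s:ℂ)*I))
      (-(s:ℂ) * Complex.exp ((s:ℂ)*I)) s := by
  have h1 := hasDerivAt_exp_I (s:ℂ)
  have h2 : HasDerivAt (fun w : ℂ => Complex.I * w) (Complex.I * 1) (s:ℂ) :=
    (hasDerivAt_id _).const_mul I
  have h3 := (h2.mul h1).sub h1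
  have h4 : HasDerivAt (fun w : ℂ => Complex.I * w * Complex.exp (w*I) - Complex.exp (w*I))
      (-(s:ℂ) * Complex.exp ((s:ℂ)*I)) (s:ℂ) := by
    refine h3.congr_deriv ?_
    symm
    have := Complex.I_sq
    linear_combination (-(Complex.exp ((s:ℂ)*I)) * s) * Complex.I_sq
  exact h4.comp_ofReal

lemma mvt2 (u v : ℝ) :
    ‖(Complex.I * (u:ℂ) * Complex.exp ((u:ℂ)*I) - Complex.exp ((u:ℂ)*I)) -
      (Complex.I * (v:ℂ) * Complex.exp ((v:ℂ)*I) - Complex.exp ((v:ℂ)*I))‖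
      ≤ max |u| |v| * |u - v| := by
  have key : ∀ s : ℝ, s ∈ uIcc v u →
      HasDerivWithinAt (fun s : ℝ => Complex.I * (s:ℂ) * Complex.exp ((s:ℂ)*I) - Complex.exp ((s:ℂ)*I))
        (-(s:ℂ) * Complex.exp ((s:ℂ)*I)) (uIcc v u) s :=
    fun s _ => (hasDerivAt_f0 s).hasDerivWithinAt
  have hb : ∀ s : ℝ, s ∈ uIcc v u → ‖-(s:ℂ) * Complex.exp ((s:ℂ)*I)‖ ≤ max |u| |v| := by
    intro s hs
    have hn : ‖-(s:ℂ) * Complex.exp ((s:ℂ)*I)‖ = |s| := by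
      rw [norm_mul, norm_neg, Complex.norm_real, Real.norm_eq_abs,
        Complex.norm_exp_ofReal_mul_I, mul_one]
    rw [hn]
    rcases mem_uIcc.1 hs with ⟨h1, h2⟩ | ⟨h1, h2⟩
    · exact abs_le.2 ⟨by linarith [neg_abs_le v, le_max_right |u| |v|],
        by linarith [le_abs_self u, le_max_left |u| |v|]⟩
    · exact abs_le.2 ⟨by linarith [neg_abs_le u, le_max_left |u| |v|],
        by linarith [le_abs_self v, le_max_right |u| |v|]⟩
  have h := (convex_uIcc v u).norm_image_sub_le_of_norm_hasDerivWithin_le key hb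
    left_mem_uIcc right_mem_uIcc
  simpa [Real.norm_eq_abs] using h

noncomputable def psi (M x : ℝ) : ℝ := M * jb x ^ (-(3/2):ℝ)

lemma psi_nonneg {M : ℝ} (hM : 0 ≤ M) (x : ℝ) : 0 ≤ psi M x :=
  mul_nonneg hM (Real.rpow_nonneg (jb_pos x).le _)

lemma psi_int (M : ℝ) : Integrable (psi M) := integrable_jb.const_mul M

lemma psi2_int (M : ℝ) : Integrable (fun p : ℝ × ℝ => psi M p.1 * psi M p.2) := by
  rw [Measure.volume_eq_prod]
  exact (psi_int M).mul_prod (psi_int M)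

lemma integral_psi (M : ℝ) : ∫ x, psi M x = M * psiC := by
  unfold psi psiC; exact integral_const_mul M _

lemma integral_psi2 (M : ℝ) : ∫ p : ℝ × ℝ, psi M p.1 * psi M p.2 = (M * psiC)^2 := by
  rw [Measure.volume_eq_prod, integral_prod_mul, integral_psi]; ring

noncomputable def Kf (σ : ℝ) (φ : ℝ → ℝ) (l : ℝ) (p : ℝ × ℝ) : ℂ :=
  Complex.exp ((σ:ℂ) * Complex.I * l * ((|p.1 - p.2| : ℝ) : ℂ)) * ((φ p.2 : ℂ) * (φ p.1 : ℂ))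

noncomputable def Gf (σ : ℝ) (φ : ℝ → ℝ) (l : ℝ) : ℂ := ∫ p : ℝ × ℝ, Kf σ φ l p

noncomputable def Kd (σ : ℝ) (φ : ℝ → ℝ) (l : ℝ) (p : ℝ × ℝ) : ℂ :=
  ((σ:ℂ) * Complex.I * ((|p.1 - p.2| : ℝ) : ℂ)) * Kf σ φ l p

noncomputable def Gd (σ : ℝ) (φ : ℝ → ℝ) (l : ℝ) : ℂ := ∫ p : ℝ × ℝ, Kd σ φ l p

section main

variable {σ M : ℝ} {φ : ℝ → ℝ}

lemma abs_sigma (hσ : σ = 1 ∨ σ = -1) : |σ| = 1 := by rcases hσ with h | h <;> simp [h]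

lemma measK (hm : Measurable φ) (l : ℝ) : Measurable (Kf σ φ l) := by
  apply Measurable.mul
  · apply Complex.measurable_exp.comp
    apply Measurable.mul measurable_const
    exact Complex.measurable_ofReal.comp ((measurable_fst.sub measurable_snd).abs)
  · exact (Complex.measurable_ofReal.comp (hm.comp measurable_snd)).mul
      (Complex.measurable_ofReal.comp (hm.comp measurable_fst))

lemma meas_K (hm : Measurable φ) (l : ℝ) : AEStronglyMeasurable (Kf σ φ l) volume :=
  (measK hm l).aestronglyMeasurable

lemma measKd (hm : Measurable φ) (l : ℝ) : Measurable (Kd σ φ l) :=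
  ((measurable_const.mul
    (Complex.measurable_ofReal.comp ((measurable_fst.sub measurable_snd).abs))).mul (measK hm l))

lemma meas_Kd (hm : Measurable φ) (l : ℝ) : AEStronglyMeasurable (Kd σ φ l) volume :=
  (measKd hm l).aestronglyMeasurable

lemma norm_Kf_eq (l : ℝ) (p : ℝ × ℝ) : ‖Kf σ φ l p‖ = |φ p.2| * |φ p.1| := by
  unfold Kf
  rw [norm_mul, norm_exp_form, one_mul, norm_mul, Complex.norm_real, Complex.norm_real,
    Real.norm_eq_abs, Real.norm_eq_abs]

lemma norm_sigma_I_mul (hσ : σ = 1 ∨ σ = -1) (a : ℝ) :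
    ‖(σ:ℂ) * Complex.I * ((a:ℝ):ℂ)‖ = |a| := by
  simp [Complex.norm_real, Complex.norm_I, abs_sigma hσ]

lemma norm_Kf (hσ : σ = 1 ∨ σ = -1) (h1 : ∀ x, |φ x| ≤ psi M x) (hM : 0 ≤ M) (l : ℝ)
    (p : ℝ × ℝ) : ‖Kf σ φ l p‖ ≤ psi M p.1 * psi M p.2 := by
  rw [norm_Kf_eq]
  calc |φ p.2| * |φ p.1| ≤ psi M p.2 * psi M p.1 :=
        mul_le_mul (h1 p.2) (h1 p.1) (abs_nonneg _) (psi_nonneg hM _)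
    _ = psi M p.1 * psi M p.2 := mul_comm _ _

lemma norm_Kd (hσ : σ = 1 ∨ σ = -1) (h1 : ∀ x, |φ x| ≤ psi M x)
    (h2 : ∀ x, |x| * |φ x| ≤ psi M x) (hM : 0 ≤ M) (l : ℝ) (p : ℝ × ℝ) :
    ‖Kd σ φ l p‖ ≤ 2 * (psi M p.1 * psi M p.2) := by
  unfold Kd
  rw [norm_mul, norm_Kf_eq, norm_sigma_I_mul hσ, _root_.abs_abs]
  have hxy : |p.1 - p.2| ≤ |p.1| + |p.2| := abs_sub p.1 p.2
  have e1 : |p.1| * |φ p.1| * |φ p.2| ≤ psi M p.1 * psi M p.2 :=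
    mul_le_mul (h2 p.1) (h1 p.2) (abs_nonneg _) (psi_nonneg hM _)
  have e2 : |φ p.1| * (|p.2| * |φ p.2|) ≤ psi M p.1 * psi M p.2 :=
    mul_le_mul (h1 p.1) (h2 p.2) (mul_nonneg (abs_nonneg _) (abs_nonneg _)) (psi_nonneg hM _)
  have hf1 : (0:ℝ) ≤ |φ p.1| := abs_nonneg _
  have hf2 : (0:ℝ) ≤ |φ p.2| := abs_nonneg _
  nlinarith [mul_le_mul_of_nonneg_right hxy (mul_nonneg hf2 hf1)]

end main

section main2
variable {σ M : ℝ} {φ : ℝ → ℝ}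

lemma int_Kf (hσ : σ = 1 ∨ σ = -1) (hm : Measurable φ) (h1 : ∀ x, |φ x| ≤ psi M x)
    (hM : 0 ≤ M) (l : ℝ) : Integrable (Kf σ φ l) :=
  (psi2_int M).mono' (meas_K hm l) (Filter.Eventually.of_forall (norm_Kf hσ h1 hM l))

lemma int_Kd (hσ : σ = 1 ∨ σ = -1) (hm : Measurable φ) (h1 : ∀ x, |φ x| ≤ psi M x)
    (h2 : ∀ x, |x| * |φ x| ≤ psi M x) (hM : 0 ≤ M) (l : ℝ) : Integrable (Kd σ φ l) :=
  ((psi2_int M).const_mul 2).mono' (meas_Kd hm l)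
    (Filter.Eventually.of_forall (norm_Kd hσ h1 h2 hM l))

lemma hasDerivAt_kernel (σ a : ℝ) (c₂ : ℂ) (l : ℝ) :
    HasDerivAt (fun t : ℝ => Complex.exp ((σ:ℂ)*Complex.I*(t:ℂ)*((a:ℝ):ℂ)) * c₂)
      ((σ:ℂ)*Complex.I*((a:ℝ):ℂ) * (Complex.exp ((σ:ℂ)*Complex.I*(l:ℂ)*((a:ℝ):ℂ)) * c₂)) l := by
  have h := ((((hasDerivAt_id ((l:ℂ))).const_mul
    ((σ:ℂ)*Complex.I)).mul_const ((a:ℝ):ℂ)).cexp.mul_const c₂).comp_ofReal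
  simp only [id_eq] at h
  convert h using 1
  ring

lemma G_deriv (hσ : σ = 1 ∨ σ = -1) (hm : Measurable φ) (h1 : ∀ x, |φ x| ≤ psi M x)
    (h2 : ∀ x, |x| * |φ x| ≤ psi M x) (hM : 0 ≤ M) (l : ℝ) :
    HasDerivAt (Gf σ φ) (Gd σ φ l) l := by
  have h := hasDerivAt_integral_of_dominated_loc_of_deriv_le (μ := volume)
    (F := fun t => Kf σ φ t) (F' := fun t => Kd σ φ t) (x₀ := l)
    (bound := fun p : ℝ × ℝ => 2 * (psi M p.1 * psi M p.2)) (Metric.ball_mem_nhds l one_pos)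
    (Filter.Eventually.of_forall fun t => meas_K hm t)
    (int_Kf hσ hm h1 hM l)
    (meas_Kd hm l)
    (Filter.Eventually.of_forall fun p t _ => norm_Kd hσ h1 h2 hM t p)
    ((psi2_int M).const_mul 2)
    (Filter.Eventually.of_forall fun p t _ => by
      unfold Kf Kd; exact hasDerivAt_kernel σ _ _ t)
  exact h.2

lemma Gd_cont (hσ : σ = 1 ∨ σ = -1) (hm : Measurable φ) (h1 : ∀ x, |φ x| ≤ psi M x)
    (h2 : ∀ x, |x| * |φ x| ≤ psi M x) (hM : 0 ≤ M) : Continuous (Gd σ φ) := by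
  apply continuous_of_dominated (bound := fun p : ℝ × ℝ => 2 * (psi M p.1 * psi M p.2))
    (fun l => meas_Kd hm l)
    (fun l => Filter.Eventually.of_forall fun p => norm_Kd hσ h1 h2 hM l p)
    ((psi2_int M).const_mul 2)
  refine Filter.Eventually.of_forall fun p => ?_
  unfold Kd Kf
  exact continuous_const.mul
    ((((continuous_const.mul Complex.continuous_ofReal).mul continuous_const).cexp).mul
      continuous_const)

lemma norm_Gf_le (hσ : σ = 1 ∨ σ = -1) (hm : Measurable φ) (h1 : ∀ x, |φ x| ≤ psi M x)
    (hM : 0 ≤ M) (l : ℝ) : ‖Gf σ φ l‖ ≤ (M * psiC)^2 := by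
  have h := norm_integral_le_of_norm_le (psi2_int M)
    (Filter.Eventually.of_forall (norm_Kf hσ h1 hM l))
  rwa [integral_psi2] at h

lemma norm_Gd_le (hσ : σ = 1 ∨ σ = -1) (hm : Measurable φ) (h1 : ∀ x, |φ x| ≤ psi M x)
    (h2 : ∀ x, |x| * |φ x| ≤ psi M x) (hM : 0 ≤ M) (l : ℝ) :
    ‖Gd σ φ l‖ ≤ 2 * (M * psiC)^2 := by
  have h := norm_integral_le_of_norm_le ((psi2_int M).const_mul 2)
    (Filter.Eventually.of_forall (norm_Kd hσ h1 h2 hM l))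
  rwa [integral_const_mul, integral_psi2] at h

end main2

section main3
variable {σ M : ℝ} {φ : ℝ → ℝ}

lemma Frepr (hσ : σ = 1 ∨ σ = -1) (hm : Measurable φ) (h1 : ∀ x, |φ x| ≤ psi M x)
    (hM : 0 ≤ M) (l : ℝ) :
    resolventFormD1 σ φ l = (σ:ℂ) * Complex.I / (2*(l:ℂ)) * Gf σ φ l := by
  unfold resolventFormD1 Gf
  have key : ∀ x y : ℝ,
      ((σ:ℂ)*Complex.I/(2*(l:ℂ))) * Complex.exp ((σ:ℂ)*Complex.I*(l:ℂ)*((|x-y|:ℝ):ℂ)) *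
        (φ y:ℂ) * (φ x:ℂ)
      = ((σ:ℂ)*Complex.I/(2*(l:ℂ))) * Kf σ φ l (x, y) := by
    intro x y
    show _ = _ * (Complex.exp ((σ:ℂ) * Complex.I * l * ((|(x,y).1 - (x,y).2| : ℝ) : ℂ)) *
      ((φ (x,y).2 : ℂ) * (φ (x,y).1 : ℂ)))
    ring
  simp_rw [key, integral_const_mul]
  congr 1
  have hi : Integrable (Function.uncurry fun x y => Kf σ φ l (x, y)) (volume.prod volume) := by
    have := int_Kf hσ hm h1 hM l
    rw [Measure.volume_eq_prod] at this
    exact this.congr (Filter.Eventually.of_forall fun p => by simp [Function.uncurry])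
  rw [MeasureTheory.integral_integral hi, Measure.volume_eq_prod]

lemma F_hasDeriv (hσ : σ = 1 ∨ σ = -1) (hm : Measurable φ) (h1 : ∀ x, |φ x| ≤ psi M x)
    (h2 : ∀ x, |x| * |φ x| ≤ psi M x) (hM : 0 ≤ M) {l : ℝ} (hl : l ≠ 0) :
    HasDerivAt (resolventFormD1 σ φ)
      (((σ:ℂ) * Complex.I / 2) * (-((l:ℂ)^2)⁻¹ * Gf σ φ l + ((l:ℂ))⁻¹ * Gd σ φ l)) l := by
  have hfe : resolventFormD1 σ φ = fun l : ℝ => ((σ:ℂ)*Complex.I/2) * (((l:ℂ))⁻¹ * Gf σ φ l) := by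
    funext t
    rw [Frepr hσ hm h1 hM t]
    ring
  rw [hfe]
  have hlc : (l:ℂ) ≠ 0 := by exact_mod_cast hl
  have hinv : HasDerivAt (fun t : ℝ => ((t:ℂ))⁻¹) (-((l:ℂ)^2)⁻¹) l :=
    (hasDerivAt_inv hlc).comp_ofReal
  exact (hinv.mul (G_deriv hσ hm h1 h2 hM l)).const_mul ((σ:ℂ)*Complex.I/2)

lemma F_contDiffOn (hσ : σ = 1 ∨ σ = -1) (hm : Measurable φ) (h1 : ∀ x, |φ x| ≤ psi M x)
    (h2 : ∀ x, |x| * |φ x| ≤ psi M x) (hM : 0 ≤ M) :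
    ContDiffOn ℝ 1 (resolventFormD1 σ φ) (Ioo (0:ℝ) (1/2)) := by
  have hfe : resolventFormD1 σ φ = fun l : ℝ => ((σ:ℂ)*Complex.I/2) * (((l:ℂ))⁻¹ * Gf σ φ l) := by
    funext t
    rw [Frepr hσ hm h1 hM t]
    ring
  rw [hfe]
  have hG : ContDiff ℝ 1 (Gf σ φ) := by
    rw [contDiff_one_iff_deriv]
    constructor
    · exact fun l => (G_deriv hσ hm h1 h2 hM l).differentiableAt
    · have : deriv (Gf σ φ) = Gd σ φ := funext fun l => (G_deriv hσ hm h1 h2 hM l).deriv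
      rw [this]
      exact Gd_cont hσ hm h1 h2 hM
  have hinv : ContDiffOn ℝ 1 (fun l : ℝ => ((l:ℂ))⁻¹) (Ioo (0:ℝ) (1/2)) := by
    intro l hl
    have hlc : (l:ℂ) ≠ 0 := by exact_mod_cast (ne_of_gt hl.1)
    exact ((contDiffAt_inv ℝ hlc).comp l
      Complex.ofRealCLM.contDiff.contDiffAt).contDiffWithinAt
  exact contDiffOn_const.mul (hinv.mul hG.contDiffOn)

end main3

noncomputable def pf (σ : ℝ) (φ : ℝ → ℝ) (l : ℝ) (x : ℝ) : ℂ :=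
  Complex.exp ((σ:ℂ)*Complex.I*(l:ℂ)*((|x|:ℝ):ℂ)) * (φ x : ℂ)

noncomputable def Pf (σ : ℝ) (φ : ℝ → ℝ) (l : ℝ) : ℂ := ∫ x : ℝ, pf σ φ l x

noncomputable def pd (σ : ℝ) (φ : ℝ → ℝ) (l : ℝ) (x : ℝ) : ℂ :=
  ((σ:ℂ)*Complex.I*((|x|:ℝ):ℂ)) * pf σ φ l x

noncomputable def Pd (σ : ℝ) (φ : ℝ → ℝ) (l : ℝ) : ℂ := ∫ x : ℝ, pd σ φ l x

noncomputable def Bf (σ : ℝ) (φ : ℝ → ℝ) (l : ℝ) (p : ℝ × ℝ) : ℂ :=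
  Complex.exp ((σ:ℂ)*Complex.I*(l:ℂ)*(((|p.1| + |p.2|):ℝ):ℂ)) * ((φ p.2 : ℂ) * (φ p.1 : ℂ))

noncomputable def Bd (σ : ℝ) (φ : ℝ → ℝ) (l : ℝ) (p : ℝ × ℝ) : ℂ :=
  ((σ:ℂ)*Complex.I*(((|p.1|+|p.2|):ℝ):ℂ)) * Bf σ φ l p

section main4
variable {σ M : ℝ} {φ : ℝ → ℝ}

lemma meas_pf (hm : Measurable φ) (l : ℝ) : Measurable (pf σ φ l) :=
  (Complex.measurable_exp.comp (measurable_const.mul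
    (Complex.measurable_ofReal.comp measurable_abs))).mul
    (Complex.measurable_ofReal.comp hm)

lemma norm_pf_eq (l x : ℝ) : ‖pf σ φ l x‖ = |φ x| := by
  unfold pf
  rw [norm_mul, norm_exp_form, one_mul, Complex.norm_real, Real.norm_eq_abs]

lemma int_pf (hm : Measurable φ) (h1 : ∀ x, |φ x| ≤ psi M x) (l : ℝ) :
    Integrable (pf σ φ l) :=
  (psi_int M).mono' (meas_pf hm l).aestronglyMeasurable
    (Filter.Eventually.of_forall fun x => by rw [norm_pf_eq]; exact h1 x)

lemma norm_pd_eq (hσ : σ = 1 ∨ σ = -1) (l x : ℝ) : ‖pd σ φ l x‖ = |x| * |φ x| := by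
  unfold pd
  rw [norm_mul, norm_pf_eq, norm_sigma_I_mul hσ, _root_.abs_abs]

lemma int_pd (hσ : σ = 1 ∨ σ = -1) (hm : Measurable φ) (h2 : ∀ x, |x| * |φ x| ≤ psi M x)
    (l : ℝ) : Integrable (pd σ φ l) :=
  (psi_int M).mono'
    (((measurable_const.mul (Complex.measurable_ofReal.comp measurable_abs)).mul
      (meas_pf hm l)).aestronglyMeasurable)
    (Filter.Eventually.of_forall fun x => by rw [norm_pd_eq hσ]; exact h2 x)

lemma norm_Pf_le (hσ : σ = 1 ∨ σ = -1) (hm : Measurable φ) (h1 : ∀ x, |φ x| ≤ psi M x)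
    (l : ℝ) : ‖Pf σ φ l‖ ≤ M * psiC := by
  have h := norm_integral_le_of_norm_le (f := pf σ φ l) (psi_int M)
    (Filter.Eventually.of_forall fun x => by rw [norm_pf_eq]; exact h1 x)
  unfold Pf
  rwa [integral_psi] at h

lemma norm_Pd_le (hσ : σ = 1 ∨ σ = -1) (hm : Measurable φ) (h2 : ∀ x, |x| * |φ x| ≤ psi M x)
    (l : ℝ) : ‖Pd σ φ l‖ ≤ M * psiC := by
  have h := norm_integral_le_of_norm_le (f := pd σ φ l) (psi_int M)
    (Filter.Eventually.of_forall fun x => by rw [norm_pd_eq hσ]; exact h2 x)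
  unfold Pd
  rwa [integral_psi] at h

lemma norm_Pf_cancel (hσ : σ = 1 ∨ σ = -1) (hm : Measurable φ)
    (h1 : ∀ x, |φ x| ≤ psi M x) (h2 : ∀ x, |x| * |φ x| ≤ psi M x)
    (hM : 0 ≤ M) (hc : (∫ x : ℝ, φ x) = 0) {l : ℝ} (hl : 0 ≤ l) :
    ‖Pf σ φ l‖ ≤ l * (M * psiC) := by
  have hint : Integrable (fun x : ℝ => (φ x : ℂ)) :=
    (psi_int M).mono' (Complex.measurable_ofReal.comp hm).aestronglyMeasurable
      (Filter.Eventually.of_forall fun x => by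
        rw [Complex.norm_real, Real.norm_eq_abs]; exact h1 x)
  have hzero : (∫ x : ℝ, (φ x : ℂ)) = 0 := by
    have h := integral_ofReal (𝕜 := ℂ) (f := φ) (μ := (volume : Measure ℝ))
    exact h.trans (by rw [hc]; norm_num)
  have heq : Pf σ φ l
      = ∫ x : ℝ, (Complex.exp ((σ:ℂ)*Complex.I*(l:ℂ)*((|x|:ℝ):ℂ)) - 1) * (φ x : ℂ) := by
    rw [show Pf σ φ l = (∫ x : ℝ, pf σ φ l x) - ∫ x : ℝ, (φ x : ℂ) by
        rw [hzero, sub_zero]; rfl,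
      ← integral_sub (int_pf hm h1 l) hint]
    congr 1
    funext x
    unfold pf
    ring
  rw [heq]
  have hpt : ∀ x : ℝ,
      ‖(Complex.exp ((σ:ℂ)*Complex.I*(l:ℂ)*((|x|:ℝ):ℂ)) - 1) * (φ x : ℂ)‖ ≤ l * psi M x := by
    intro x
    rw [norm_mul, Complex.norm_real, Real.norm_eq_abs, cast_exp]
    calc ‖Complex.exp (((σ*l*|x| : ℝ):ℂ) * Complex.I) - 1‖ * |φ x|
        ≤ |(σ*l*|x| : ℝ)| * |φ x| := mul_le_mul_of_nonneg_right (mvt1 _) (abs_nonneg _)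
      _ = l * (|x| * |φ x|) := by
          rw [abs_mul, abs_mul, abs_sigma hσ, one_mul, _root_.abs_abs, _root_.abs_of_nonneg hl]
          ring
      _ ≤ l * psi M x := mul_le_mul_of_nonneg_left (h2 x) hl
  have hb := norm_integral_le_of_norm_le ((psi_int M).const_mul l)
    (Filter.Eventually.of_forall hpt)
  rwa [integral_const_mul, integral_psi] at hb

end main4

section main5
variable {σ M : ℝ} {φ : ℝ → ℝ}

lemma measBf (hm : Measurable φ) (l : ℝ) : Measurable (Bf σ φ l) := by
  apply Measurable.mul
  · apply Complex.measurable_exp.comp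
    apply Measurable.mul measurable_const
    exact Complex.measurable_ofReal.comp (measurable_fst.abs.add measurable_snd.abs)
  · exact (Complex.measurable_ofReal.comp (hm.comp measurable_snd)).mul
      (Complex.measurable_ofReal.comp (hm.comp measurable_fst))

lemma norm_Bf_eq (l : ℝ) (p : ℝ × ℝ) : ‖Bf σ φ l p‖ = |φ p.2| * |φ p.1| := by
  unfold Bf
  rw [norm_mul, norm_exp_form, one_mul, norm_mul, Complex.norm_real, Complex.norm_real,
    Real.norm_eq_abs, Real.norm_eq_abs]

lemma int_Bf (hσ : σ = 1 ∨ σ = -1) (hm : Measurable φ) (h1 : ∀ x, |φ x| ≤ psi M x)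
    (hM : 0 ≤ M) (l : ℝ) : Integrable (Bf σ φ l) := by
  refine (psi2_int M).mono' (measBf hm l).aestronglyMeasurable
    (Filter.Eventually.of_forall fun p => ?_)
  rw [norm_Bf_eq]
  calc |φ p.2| * |φ p.1| ≤ psi M p.2 * psi M p.1 :=
        mul_le_mul (h1 p.2) (h1 p.1) (abs_nonneg _) (psi_nonneg hM _)
    _ = psi M p.1 * psi M p.2 := mul_comm _ _

lemma norm_Bd_le (hσ : σ = 1 ∨ σ = -1) (h1 : ∀ x, |φ x| ≤ psi M x)
    (h2 : ∀ x, |x| * |φ x| ≤ psi M x) (hM : 0 ≤ M) (l : ℝ) (p : ℝ × ℝ) :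
    ‖Bd σ φ l p‖ ≤ 2 * (psi M p.1 * psi M p.2) := by
  unfold Bd
  rw [norm_mul, norm_Bf_eq, norm_sigma_I_mul hσ]
  have hb : |(|p.1| + |p.2|)| = |p.1| + |p.2| :=
    _root_.abs_of_nonneg (add_nonneg (abs_nonneg _) (abs_nonneg _))
  rw [hb]
  have e1 : |p.1| * |φ p.1| * |φ p.2| ≤ psi M p.1 * psi M p.2 :=
    mul_le_mul (h2 p.1) (h1 p.2) (abs_nonneg _) (psi_nonneg hM _)
  have e2 : |φ p.1| * (|p.2| * |φ p.2|) ≤ psi M p.1 * psi M p.2 :=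
    mul_le_mul (h1 p.1) (h2 p.2) (mul_nonneg (abs_nonneg _) (abs_nonneg _)) (psi_nonneg hM _)
  nlinarith [abs_nonneg (φ p.1), abs_nonneg (φ p.2), abs_nonneg p.1, abs_nonneg p.2]

lemma measBd (hm : Measurable φ) (l : ℝ) : Measurable (Bd σ φ l) :=
  (measurable_const.mul
    (Complex.measurable_ofReal.comp (measurable_fst.abs.add measurable_snd.abs))).mul
    (measBf hm l)

lemma int_Bd (hσ : σ = 1 ∨ σ = -1) (hm : Measurable φ) (h1 : ∀ x, |φ x| ≤ psi M x)
    (h2 : ∀ x, |x| * |φ x| ≤ psi M x) (hM : 0 ≤ M) (l : ℝ) : Integrable (Bd σ φ l) :=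
  ((psi2_int M).const_mul 2).mono' (measBd hm l).aestronglyMeasurable
    (Filter.Eventually.of_forall (norm_Bd_le hσ h1 h2 hM l))

lemma Bf_factor (l : ℝ) (p : ℝ × ℝ) : Bf σ φ l p = pf σ φ l p.1 * pf σ φ l p.2 := by
  unfold Bf pf
  push_cast
  rw [mul_add ((σ:ℂ) * Complex.I * (l:ℂ)), Complex.exp_add]
  ring

lemma intBf_eq (hσ : σ = 1 ∨ σ = -1) (hm : Measurable φ) (h1 : ∀ x, |φ x| ≤ psi M x)
    (hM : 0 ≤ M) (l : ℝ) : (∫ p : ℝ × ℝ, Bf σ φ l p) = (Pf σ φ l)^2 := by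
  simp_rw [Bf_factor]
  rw [Measure.volume_eq_prod, integral_prod_mul]
  unfold Pf
  ring

lemma Bd_factor (l : ℝ) (p : ℝ × ℝ) :
    Bd σ φ l p = pd σ φ l p.1 * pf σ φ l p.2 + pf σ φ l p.1 * pd σ φ l p.2 := by
  unfold Bd Bf pd pf
  push_cast
  rw [mul_add ((σ:ℂ) * Complex.I * (l:ℂ)), Complex.exp_add]
  ring

lemma intBd_eq (hσ : σ = 1 ∨ σ = -1) (hm : Measurable φ) (h1 : ∀ x, |φ x| ≤ psi M x)
    (h2 : ∀ x, |x| * |φ x| ≤ psi M x) (hM : 0 ≤ M) (l : ℝ) :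
    (∫ p : ℝ × ℝ, Bd σ φ l p) = 2 * (Pf σ φ l * Pd σ φ l) := by
  simp_rw [Bd_factor]
  rw [Measure.volume_eq_prod]
  rw [integral_add ((int_pd hσ hm h2 l).mul_prod (int_pf hm h1 l))
    ((int_pf hm h1 l).mul_prod (int_pd hσ hm h2 l)), integral_prod_mul, integral_prod_mul]
  unfold Pf Pd
  ring

lemma sub_abs_nonneg (x y : ℝ) : 0 ≤ (|x| + |y|) - |x - y| := by
  have := abs_sub x y
  linarith

lemma sub_abs_le_min (x y : ℝ) : (|x| + |y|) - |x - y| ≤ 2 * min |x| |y| := by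
  rcases le_total |x| |y| with h | h
  · have h2 : |y| - |x| ≤ |x - y| := by
      rw [abs_sub_comm]
      exact (abs_sub_abs_le_abs_sub y x)
    rw [min_eq_left h]
    linarith
  · have h2 : |x| - |y| ≤ |x - y| := abs_sub_abs_le_abs_sub x y
    rw [min_eq_right h]
    linarith

end main5

section main6
variable {σ M : ℝ} {φ : ℝ → ℝ}

lemma norm_Kf_sub_Bf (hσ : σ = 1 ∨ σ = -1) (h1 : ∀ x, |φ x| ≤ psi M x)
    (h2 : ∀ x, |x| * |φ x| ≤ psi M x) (hM : 0 ≤ M) {l : ℝ} (hl : 0 ≤ l) (p : ℝ × ℝ) :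
    ‖Kf σ φ l p - Bf σ φ l p‖ ≤ (2*l) * (psi M p.1 * psi M p.2) := by
  unfold Kf Bf
  rw [← sub_mul, norm_mul, norm_mul, Complex.norm_real, Complex.norm_real,
    Real.norm_eq_abs, Real.norm_eq_abs]
  set a := |p.1 - p.2| with ha
  set b := |p.1| + |p.2| with hb
  have hab : a ≤ b := abs_sub p.1 p.2
  have hexp : ‖Complex.exp ((σ:ℂ)*Complex.I*(l:ℂ)*((a:ℝ):ℂ)) -
      Complex.exp ((σ:ℂ)*Complex.I*(l:ℂ)*((b:ℝ):ℂ))‖ ≤ l * (b - a) := by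
    rw [cast_exp σ l a, cast_exp σ l b]
    calc ‖Complex.exp (((σ*l*a:ℝ):ℂ)*Complex.I) - Complex.exp (((σ*l*b:ℝ):ℂ)*Complex.I)‖
        ≤ |σ*l*a - σ*l*b| := norm_exp_sub_exp _ _
      _ = l * (b - a) := by
          rw [show σ*l*a - σ*l*b = σ*(l*(a-b)) by ring, abs_mul, abs_sigma hσ, one_mul,
            abs_mul, _root_.abs_of_nonneg hl, abs_sub_comm, _root_.abs_of_nonneg (by linarith)]
  have hmin : b - a ≤ 2 * min |p.1| |p.2| := sub_abs_le_min p.1 p.2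
  have hprod : min |p.1| |p.2| * (|φ p.2| * |φ p.1|) ≤ psi M p.1 * psi M p.2 := by
    have : min |p.1| |p.2| * (|φ p.2| * |φ p.1|) ≤ |p.1| * (|φ p.2| * |φ p.1|) :=
      mul_le_mul_of_nonneg_right (min_le_left _ _) (mul_nonneg (abs_nonneg _) (abs_nonneg _))
    refine this.trans ?_
    calc |p.1| * (|φ p.2| * |φ p.1|) = (|p.1| * |φ p.1|) * |φ p.2| := by ring
      _ ≤ psi M p.1 * psi M p.2 :=
          mul_le_mul (h2 p.1) (h1 p.2) (abs_nonneg _) (psi_nonneg hM _)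
  have hf : (0:ℝ) ≤ |φ p.2| * |φ p.1| := mul_nonneg (abs_nonneg _) (abs_nonneg _)
  calc ‖Complex.exp ((σ:ℂ)*Complex.I*(l:ℂ)*((a:ℝ):ℂ)) -
        Complex.exp ((σ:ℂ)*Complex.I*(l:ℂ)*((b:ℝ):ℂ))‖ * (|φ p.2| * |φ p.1|)
      ≤ (l * (b - a)) * (|φ p.2| * |φ p.1|) := mul_le_mul_of_nonneg_right hexp hf
    _ ≤ (l * (2 * min |p.1| |p.2|)) * (|φ p.2| * |φ p.1|) :=
        mul_le_mul_of_nonneg_right (mul_le_mul_of_nonneg_left hmin hl) hf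
    _ = (2*l) * (min |p.1| |p.2| * (|φ p.2| * |φ p.1|)) := by ring
    _ ≤ (2*l) * (psi M p.1 * psi M p.2) :=
        mul_le_mul_of_nonneg_left hprod (by linarith)

lemma Gf_decomp (hσ : σ = 1 ∨ σ = -1) (hm : Measurable φ) (h1 : ∀ x, |φ x| ≤ psi M x)
    (hM : 0 ≤ M) (l : ℝ) :
    Gf σ φ l = (Pf σ φ l)^2 + ∫ p : ℝ × ℝ, (Kf σ φ l p - Bf σ φ l p) := by
  have h : (∫ p : ℝ × ℝ, Kf σ φ l p) = ∫ p : ℝ × ℝ, (Bf σ φ l p + (Kf σ φ l p - Bf σ φ l p)) := by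
    congr 1
    funext p
    ring
  unfold Gf
  have hsub : Integrable (fun p : ℝ × ℝ => Kf σ φ l p - Bf σ φ l p) :=
    (int_Kf hσ hm h1 hM l).sub (int_Bf hσ hm h1 hM l)
  rw [h, integral_add (int_Bf hσ hm h1 hM l) hsub, intBf_eq hσ hm h1 hM l]

lemma norm_E_le (hσ : σ = 1 ∨ σ = -1) (hm : Measurable φ) (h1 : ∀ x, |φ x| ≤ psi M x)
    (h2 : ∀ x, |x| * |φ x| ≤ psi M x) (hM : 0 ≤ M) {l : ℝ} (hl : 0 ≤ l) :
    ‖∫ p : ℝ × ℝ, (Kf σ φ l p - Bf σ φ l p)‖ ≤ (2*l) * (M * psiC)^2 := by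
  have hb := norm_integral_le_of_norm_le ((psi2_int M).const_mul (2*l))
    (Filter.Eventually.of_forall (norm_Kf_sub_Bf hσ h1 h2 hM hl))
  rwa [integral_const_mul, integral_psi2] at hb

lemma cancel_G (hσ : σ = 1 ∨ σ = -1) (hm : Measurable φ) (h1 : ∀ x, |φ x| ≤ psi M x)
    (h2 : ∀ x, |x| * |φ x| ≤ psi M x) (hM : 0 ≤ M) (hc : (∫ x : ℝ, φ x) = 0)
    {l : ℝ} (hl : 0 ≤ l) :
    ‖Gf σ φ l‖ ≤ (l^2 + 2*l) * (M * psiC)^2 := by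
  rw [Gf_decomp hσ hm h1 hM l]
  calc ‖(Pf σ φ l)^2 + ∫ p : ℝ × ℝ, (Kf σ φ l p - Bf σ φ l p)‖
      ≤ ‖(Pf σ φ l)^2‖ + ‖∫ p : ℝ × ℝ, (Kf σ φ l p - Bf σ φ l p)‖ := norm_add_le _ _
    _ ≤ (l * (M * psiC))^2 + (2*l) * (M * psiC)^2 := by
        refine add_le_add ?_ (norm_E_le hσ hm h1 h2 hM hl)
        rw [norm_pow]
        exact pow_le_pow_left₀ (norm_nonneg _) (norm_Pf_cancel hσ hm h1 h2 hM hc hl) 2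
    _ = (l^2 + 2*l) * (M * psiC)^2 := by ring

end main6

section main7
variable {σ M : ℝ} {φ : ℝ → ℝ}

lemma D_identity (l : ℝ) (p : ℝ × ℝ) :
    ((l:ℂ) * Kd σ φ l p - Kf σ φ l p) - ((l:ℂ) * Bd σ φ l p - Bf σ φ l p)
      = ((Complex.I * ((σ*l*|p.1-p.2| : ℝ):ℂ) * Complex.exp (((σ*l*|p.1-p.2| : ℝ):ℂ)*Complex.I)
            - Complex.exp (((σ*l*|p.1-p.2| : ℝ):ℂ)*Complex.I))
          - (Complex.I * ((σ*l*(|p.1|+|p.2|) : ℝ):ℂ)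
              * Complex.exp (((σ*l*(|p.1|+|p.2|) : ℝ):ℂ)*Complex.I)
            - Complex.exp (((σ*l*(|p.1|+|p.2|) : ℝ):ℂ)*Complex.I)))
        * ((φ p.2 : ℂ) * (φ p.1 : ℂ)) := by
  unfold Kd Kf Bd Bf
  rw [cast_exp σ l (|p.1-p.2|), cast_exp σ l (|p.1|+|p.2|)]
  push_cast
  ring

lemma norm_D_le (hσ : σ = 1 ∨ σ = -1) (h1 : ∀ x, |φ x| ≤ psi M x)
    (h2 : ∀ x, |x| * |φ x| ≤ psi M x) (hM : 0 ≤ M) {l : ℝ} (hl : 0 ≤ l) (p : ℝ × ℝ) :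
    ‖((l:ℂ) * Kd σ φ l p - Kf σ φ l p) - ((l:ℂ) * Bd σ φ l p - Bf σ φ l p)‖
      ≤ (4*l^2) * (psi M p.1 * psi M p.2) := by
  rw [D_identity, norm_mul, norm_mul, Complex.norm_real, Complex.norm_real,
    Real.norm_eq_abs, Real.norm_eq_abs]
  set a := |p.1 - p.2| with ha
  set b := |p.1| + |p.2| with hb
  have ha0 : 0 ≤ a := abs_nonneg _
  have hb0 : 0 ≤ b := add_nonneg (abs_nonneg _) (abs_nonneg _)
  have hab : a ≤ b := abs_sub p.1 p.2
  have hmvt := mvt2 (σ*l*a) (σ*l*b)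
  have hmax : max |σ*l*a| |σ*l*b| = l * b := by
    rw [abs_mul, abs_mul, abs_mul, abs_mul, abs_sigma hσ, one_mul,
      _root_.abs_of_nonneg hl, _root_.abs_of_nonneg ha0, _root_.abs_of_nonneg hb0]
    exact max_eq_right (mul_le_mul_of_nonneg_left hab hl)
  have hdiff : |σ*l*a - σ*l*b| ≤ l * (2 * min |p.1| |p.2|) := by
    rw [show σ*l*a - σ*l*b = σ*(l*(a-b)) by ring, abs_mul, abs_sigma hσ, one_mul, abs_mul,
      _root_.abs_of_nonneg hl, abs_sub_comm, _root_.abs_of_nonneg (by linarith)]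
    exact mul_le_mul_of_nonneg_left (sub_abs_le_min p.1 p.2) hl
  have hnorm : ‖(Complex.I * ((σ*l*a : ℝ):ℂ) * Complex.exp (((σ*l*a : ℝ):ℂ)*Complex.I)
        - Complex.exp (((σ*l*a : ℝ):ℂ)*Complex.I))
      - (Complex.I * ((σ*l*b : ℝ):ℂ) * Complex.exp (((σ*l*b : ℝ):ℂ)*Complex.I)
        - Complex.exp (((σ*l*b : ℝ):ℂ)*Complex.I))‖ ≤ (l * b) * (l * (2 * min |p.1| |p.2|)) := by
    refine hmvt.trans ?_
    rw [hmax]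
    exact mul_le_mul_of_nonneg_left hdiff (by positivity)
  have hf : (0:ℝ) ≤ |φ p.2| * |φ p.1| := mul_nonneg (abs_nonneg _) (abs_nonneg _)
  have hkey : b * min |p.1| |p.2| * (|φ p.2| * |φ p.1|) ≤ 2 * (psi M p.1 * psi M p.2) := by
    have e1 : |p.1| * min |p.1| |p.2| * (|φ p.2| * |φ p.1|)
        ≤ (|p.1| * |φ p.1|) * (|p.2| * |φ p.2|) := by
      have h := mul_le_mul_of_nonneg_right
        (mul_le_mul_of_nonneg_left (min_le_right |p.1| |p.2|) (abs_nonneg p.1)) hf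
      exact h.trans_eq (by ring)
    have e2 : |p.2| * min |p.1| |p.2| * (|φ p.2| * |φ p.1|)
        ≤ (|p.1| * |φ p.1|) * (|p.2| * |φ p.2|) := by
      have h := mul_le_mul_of_nonneg_right
        (mul_le_mul_of_nonneg_left (min_le_left |p.1| |p.2|) (abs_nonneg p.2)) hf
      exact h.trans_eq (by ring)
    have e3 : (|p.1| * |φ p.1|) * (|p.2| * |φ p.2|) ≤ psi M p.1 * psi M p.2 :=
      mul_le_mul (h2 p.1) (h2 p.2) (mul_nonneg (abs_nonneg _) (abs_nonneg _)) (psi_nonneg hM _)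
    rw [hb]
    nlinarith
  calc _ ≤ ((l * b) * (l * (2 * min |p.1| |p.2|))) * (|φ p.2| * |φ p.1|) :=
        mul_le_mul_of_nonneg_right hnorm hf
    _ = (2*l^2) * (b * min |p.1| |p.2| * (|φ p.2| * |φ p.1|)) := by ring
    _ ≤ (2*l^2) * (2 * (psi M p.1 * psi M p.2)) :=
        mul_le_mul_of_nonneg_left hkey (by positivity)
    _ = (4*l^2) * (psi M p.1 * psi M p.2) := by ring

lemma cancel_N (hσ : σ = 1 ∨ σ = -1) (hm : Measurable φ) (h1 : ∀ x, |φ x| ≤ psi M x)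
    (h2 : ∀ x, |x| * |φ x| ≤ psi M x) (hM : 0 ≤ M) (hc : (∫ x : ℝ, φ x) = 0)
    {l : ℝ} (hl : 0 ≤ l) :
    ‖(l:ℂ) * Gd σ φ l - Gf σ φ l‖ ≤ 7 * l^2 * (M * psiC)^2 := by
  have hiKd := int_Kd hσ hm h1 h2 hM l
  have hiKf := int_Kf hσ hm h1 hM l
  have hiBd := int_Bd hσ hm h1 h2 hM l
  have hiBf := int_Bf hσ hm h1 hM l
  have hiA : Integrable (fun p : ℝ × ℝ => (l:ℂ) * Kd σ φ l p - Kf σ φ l p) :=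
    (hiKd.const_mul ((l:ℂ))).sub hiKf
  have hiB : Integrable (fun p : ℝ × ℝ => (l:ℂ) * Bd σ φ l p - Bf σ φ l p) :=
    (hiBd.const_mul ((l:ℂ))).sub hiBf
  have hiD : Integrable (fun p : ℝ × ℝ =>
      ((l:ℂ) * Kd σ φ l p - Kf σ φ l p) - ((l:ℂ) * Bd σ φ l p - Bf σ φ l p)) := hiA.sub hiB
  have hA : (l:ℂ) * Gd σ φ l - Gf σ φ l = ∫ p : ℝ × ℝ, ((l:ℂ) * Kd σ φ l p - Kf σ φ l p) := by
    unfold Gd Gf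
    rw [integral_sub (hiKd.const_mul ((l:ℂ))) hiKf, integral_const_mul]
  have hB : (l:ℂ) * (2 * (Pf σ φ l * Pd σ φ l)) - (Pf σ φ l)^2
      = ∫ p : ℝ × ℝ, ((l:ℂ) * Bd σ φ l p - Bf σ φ l p) := by
    rw [integral_sub (hiBd.const_mul ((l:ℂ))) hiBf, integral_const_mul,
      intBd_eq hσ hm h1 h2 hM l, intBf_eq hσ hm h1 hM l]
  have hsplit : (l:ℂ) * Gd σ φ l - Gf σ φ l
      = (∫ p : ℝ × ℝ, (((l:ℂ) * Kd σ φ l p - Kf σ φ l p) - ((l:ℂ) * Bd σ φ l p - Bf σ φ l p)))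
        + ((l:ℂ) * (2 * (Pf σ φ l * Pd σ φ l)) - (Pf σ φ l)^2) := by
    rw [hA, hB, integral_sub hiA hiB]
    ring
  rw [hsplit]
  have hT1 : ‖∫ p : ℝ × ℝ,
      (((l:ℂ) * Kd σ φ l p - Kf σ φ l p) - ((l:ℂ) * Bd σ φ l p - Bf σ φ l p))‖
      ≤ (4*l^2) * (M * psiC)^2 := by
    have hb := norm_integral_le_of_norm_le ((psi2_int M).const_mul (4*l^2))
      (Filter.Eventually.of_forall (norm_D_le hσ h1 h2 hM hl))
    rwa [integral_const_mul, integral_psi2] at hb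
  have hK : 0 ≤ M * psiC := mul_nonneg hM psiC_nonneg
  have hT2 : ‖(l:ℂ) * (2 * (Pf σ φ l * Pd σ φ l)) - (Pf σ φ l)^2‖ ≤ 3 * l^2 * (M * psiC)^2 := by
    have hP := norm_Pf_cancel hσ hm h1 h2 hM hc hl
    have hPd := norm_Pd_le hσ hm h2 l
    calc ‖(l:ℂ) * (2 * (Pf σ φ l * Pd σ φ l)) - (Pf σ φ l)^2‖
        ≤ ‖(l:ℂ) * (2 * (Pf σ φ l * Pd σ φ l))‖ + ‖(Pf σ φ l)^2‖ := norm_sub_le _ _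
      _ = l * (2 * (‖Pf σ φ l‖ * ‖Pd σ φ l‖)) + ‖Pf σ φ l‖^2 := by
          rw [norm_mul, norm_mul, norm_mul, norm_pow, Complex.norm_real, Real.norm_eq_abs,
            _root_.abs_of_nonneg hl]
          norm_num
      _ ≤ l * (2 * ((l * (M * psiC)) * (M * psiC))) + (l * (M * psiC))^2 := by
          refine add_le_add ?_ ?_
          · refine mul_le_mul_of_nonneg_left (mul_le_mul_of_nonneg_left ?_ (by norm_num)) hl
            exact mul_le_mul hP hPd (norm_nonneg _) (by positivity)
          · exact pow_le_pow_left₀ (norm_nonneg _) hP 2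
      _ = 3 * l^2 * (M * psiC)^2 := by ring
  calc _ ≤ _ := norm_add_le _ _
    _ ≤ (4*l^2) * (M * psiC)^2 + 3 * l^2 * (M * psiC)^2 := add_le_add hT1 hT2
    _ = 7 * l^2 * (M * psiC)^2 := by ring

end main7

section final
variable {σ M : ℝ} {φ : ℝ → ℝ}

lemma norm_coeff {l : ℝ} (hσ : σ = 1 ∨ σ = -1) (hl : 0 < l) :
    ‖(σ:ℂ) * Complex.I / (2*(l:ℂ))‖ = 1/(2*l) := by
  rw [norm_div, norm_mul, norm_mul, Complex.norm_I, Complex.norm_real, Real.norm_eq_abs,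
    abs_sigma hσ, Complex.norm_real, Real.norm_eq_abs, _root_.abs_of_nonneg hl.le]
  norm_num

lemma norm_coeff2 (hσ : σ = 1 ∨ σ = -1) : ‖(σ:ℂ) * Complex.I / 2‖ = 1/2 := by
  rw [norm_div, norm_mul, Complex.norm_I, Complex.norm_real, Real.norm_eq_abs, abs_sigma hσ]
  norm_num

lemma deriv_formula (hσ : σ = 1 ∨ σ = -1) (hm : Measurable φ) (h1 : ∀ x, |φ x| ≤ psi M x)
    (h2 : ∀ x, |x| * |φ x| ≤ psi M x) (hM : 0 ≤ M) {l : ℝ} (hl : l ≠ 0) :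
    deriv (resolventFormD1 σ φ) l
      = ((σ:ℂ)*Complex.I/2) * (((l:ℂ)^2)⁻¹ * ((l:ℂ) * Gd σ φ l - Gf σ φ l)) := by
  rw [(F_hasDeriv hσ hm h1 h2 hM hl).deriv]
  have hlc : (l:ℂ) ≠ 0 := by exact_mod_cast hl
  field_simp
  ring

lemma rpow_neg_two {l : ℝ} (hl : 0 < l) : l ^ (-(2:ℝ)) = (l^2)⁻¹ := by
  rw [Real.rpow_neg hl.le]
  congr 1
  rw [← Real.rpow_natCast l 2]
  norm_num

/-- Estimate (2.25) of the paper (Lemma 2.3, case `d = 1`): low-energy derivative bounds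
for `F^±`, with an improvement when `∫ φ = 0`. -/
theorem low_energy_F_bounds_d1 :
    ∃ C₀ > 0, ∃ C₁ > 0, ∀ σ : ℝ, (σ = 1 ∨ σ = -1) →
      ∀ (φ : ℝ → ℝ) (M δ : ℝ), Measurable φ → 0 < M → 5/2 < δ →
        (∀ x : ℝ, |φ x| ≤ M * Real.sqrt (1 + x ^ 2) ^ (-δ)) →
        ContDiffOn ℝ 1 (resolventFormD1 σ φ) (Ioo 0 (1/2)) ∧
        (∀ l ∈ Ioo (0:ℝ) (1/2),
          ‖resolventFormD1 σ φ l‖ ≤ C₀ * M ^ 2 * l ^ (-(1:ℝ)) ∧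
          ‖deriv (resolventFormD1 σ φ) l‖ ≤ C₁ * M ^ 2 * l ^ (-(2:ℝ))) ∧
        ((∫ x : ℝ, φ x) = 0 →
          ∀ l ∈ Ioo (0:ℝ) (1/2),
            ‖resolventFormD1 σ φ l‖ ≤ C₀ * M ^ 2 ∧
            ‖deriv (resolventFormD1 σ φ) l‖ ≤ C₁ * M ^ 2) := by
  refine ⟨2*(psiC^2+1), by positivity, 8*(psiC^2+1), by positivity, ?_⟩

  intro σ hσ φ M δ hm hM hδ hφ
  have hM0 : 0 ≤ M := hM.le
  have h1 : ∀ x, |φ x| ≤ psi M x := by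
    intro x
    refine (hφ x).trans ?_
    exact mul_le_mul_of_nonneg_left
      (Real.rpow_le_rpow_of_exponent_le (one_le_jb_s11 x) (by linarith)) hM0
  have h2 : ∀ x, |x| * |φ x| ≤ psi M x := by
    intro x
    have ha : |x| * |φ x| ≤ jb x * (M * jb x ^ (-δ)) :=
      mul_le_mul (abs_le_jb_s11 x) (hφ x) (abs_nonneg _) (jb_pos x).le
    refine ha.trans ?_
    have he : jb x * (M * jb x ^ (-δ)) = M * jb x ^ (1 + -δ) := by
      rw [Real.rpow_add (jb_pos x), Real.rpow_one]
      ring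
    rw [he]
    exact mul_le_mul_of_nonneg_left
      (Real.rpow_le_rpow_of_exponent_le (one_le_jb_s11 x) (by linarith)) hM0
  have hKnn : (0:ℝ) ≤ M * psiC := mul_nonneg hM0 psiC_nonneg
  refine ⟨F_contDiffOn hσ hm h1 h2 hM0, ?_, ?_⟩
  · intro l hl
    obtain ⟨hl0, hl2⟩ := hl
    have hlne : l ≠ 0 := ne_of_gt hl0
    constructor
    · rw [Frepr hσ hm h1 hM0 l, norm_mul, norm_coeff hσ hl0, Real.rpow_neg_one]
      calc 1/(2*l) * ‖Gf σ φ l‖ ≤ 1/(2*l) * (M*psiC)^2 :=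
            mul_le_mul_of_nonneg_left (norm_Gf_le hσ hm h1 hM0 l) (by positivity)
        _ = (psiC^2/2) * M^2 * l⁻¹ := by field_simp
        _ ≤ 2*(psiC^2+1) * M^2 * l⁻¹ := by
            have : psiC^2/2 ≤ 2*(psiC^2+1) := by nlinarith [psiC_nonneg]
            gcongr
    · rw [deriv_formula hσ hm h1 h2 hM0 hlne, norm_mul, norm_coeff2 hσ, norm_mul, norm_inv,
        norm_pow, Complex.norm_real, Real.norm_eq_abs, _root_.abs_of_nonneg hl0.le,
        rpow_neg_two hl0]
      have hN : ‖(l:ℂ) * Gd σ φ l - Gf σ φ l‖ ≤ 2 * (M*psiC)^2 := by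
        calc ‖(l:ℂ) * Gd σ φ l - Gf σ φ l‖ ≤ ‖(l:ℂ) * Gd σ φ l‖ + ‖Gf σ φ l‖ := norm_sub_le _ _
          _ = l * ‖Gd σ φ l‖ + ‖Gf σ φ l‖ := by
              rw [norm_mul, Complex.norm_real, Real.norm_eq_abs, _root_.abs_of_nonneg hl0.le]
          _ ≤ l * (2 * (M*psiC)^2) + (M*psiC)^2 := by
              refine add_le_add (mul_le_mul_of_nonneg_left (norm_Gd_le hσ hm h1 h2 hM0 l) hl0.le)
                (norm_Gf_le hσ hm h1 hM0 l)
          _ ≤ 2 * (M*psiC)^2 := by nlinarith [sq_nonneg (M*psiC)]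
      calc 1/2 * ((l^2)⁻¹ * ‖(l:ℂ) * Gd σ φ l - Gf σ φ l‖)
          ≤ 1/2 * ((l^2)⁻¹ * (2 * (M*psiC)^2)) := by
            refine mul_le_mul_of_nonneg_left (mul_le_mul_of_nonneg_left hN (by positivity))
              (by norm_num)
        _ = (psiC^2) * M^2 * (l^2)⁻¹ := by field_simp
        _ ≤ 8*(psiC^2+1) * M^2 * (l^2)⁻¹ := by
            have : (psiC^2 : ℝ) ≤ 8*(psiC^2+1) := by nlinarith [psiC_nonneg]
            gcongr
  · intro hc l hl
    obtain ⟨hl0, hl2⟩ := hl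
    have hlne : l ≠ 0 := ne_of_gt hl0
    constructor
    · rw [Frepr hσ hm h1 hM0 l, norm_mul, norm_coeff hσ hl0]
      calc 1/(2*l) * ‖Gf σ φ l‖ ≤ 1/(2*l) * ((l^2 + 2*l) * (M*psiC)^2) :=
            mul_le_mul_of_nonneg_left (cancel_G hσ hm h1 h2 hM0 hc hl0.le) (by positivity)
        _ = ((l + 2)/2) * (psiC^2 * M^2) := by field_simp
        _ ≤ 2*(psiC^2+1) * M^2 := by
            nlinarith [psiC_nonneg, sq_nonneg M, sq_nonneg psiC, mul_nonneg (sq_nonneg psiC) (sq_nonneg M)]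
    · rw [deriv_formula hσ hm h1 h2 hM0 hlne, norm_mul, norm_coeff2 hσ, norm_mul, norm_inv,
        norm_pow, Complex.norm_real, Real.norm_eq_abs, _root_.abs_of_nonneg hl0.le]
      calc 1/2 * ((l^2)⁻¹ * ‖(l:ℂ) * Gd σ φ l - Gf σ φ l‖)
          ≤ 1/2 * ((l^2)⁻¹ * (7 * l^2 * (M*psiC)^2)) := by
            refine mul_le_mul_of_nonneg_left
              (mul_le_mul_of_nonneg_left (cancel_N hσ hm h1 h2 hM0 hc hl0.le) (by positivity))
              (by norm_num)
        _ = (7/2) * (psiC^2 * M^2) := by field_simp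
        _ ≤ 8*(psiC^2+1) * M^2 := by
            nlinarith [psiC_nonneg, sq_nonneg M, mul_nonneg (sq_nonneg psiC) (sq_nonneg M)]

end final
end

section
/- Let φ be a real-valued measurable function on ℝ with |φ(x)| ≤ M⟨x⟩^{−δ} for some M > 0 and δ > 5/2, and assume ∫_ℝ φ(x) dx ≠ 0. Then there exist λ₀ ∈ (0, 1) and C > 0, both depending only on φ (in particular independent of α), such that for every α > 0 and every 0 < λ < λ₀ one has 1 + α F^±(λ²) ≠ 0 and, for k ∈ {0, 1}: |d^k/dλ^k [ α / (λ (1 + α F^±(λ²))) ]| ≤ C λ^{−k}. -/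
open MeasureTheory Set

section aux


variable {φ : ℝ → ℝ} {M δ : ℝ}

lemma aux_int1 (hφ : Measurable φ) (hδ : 5/2 < δ)
    (hdecay : ∀ x : ℝ, |φ x| ≤ M * Real.sqrt (1 + x ^ 2) ^ (-δ)) :
    Integrable (fun x : ℝ => (1 + |x|) * |φ x|) := by
  have h1 : Integrable (fun x : ℝ => (2*M) * ((1 : ℝ) + ‖x‖ ^ 2) ^ (-(δ-1) / 2)) (volume : Measure ℝ) :=
    (integrable_rpow_neg_one_add_norm_sq (by simp; linarith)).const_mul _
  refine h1.mono' ((measurable_const.add (_root_.measurable_abs)).mul hφ.abs).aestronglyMeasurable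
    (Filter.Eventually.of_forall fun x => ?_)
  have hb : (0:ℝ) < 1 + x^2 := by positivity
  have hφx : |φ x| ≤ M * (1+x^2) ^ (-δ/2) := by
    have h := hdecay x
    rw [Real.sqrt_eq_rpow, ← Real.rpow_mul hb.le] at h
    convert h using 3
    ring
  have h2 : 1 + |x| ≤ 2 * (1+x^2) ^ ((1:ℝ)/2) := by
    rw [← Real.sqrt_eq_rpow]
    have e1 : (1:ℝ) ≤ Real.sqrt (1+x^2) := by
      have := Real.sqrt_le_sqrt (show (1:ℝ) ≤ 1+x^2 by nlinarith)
      rwa [Real.sqrt_one] at this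
    have e2 : |x| ≤ Real.sqrt (1+x^2) := by
      rw [← Real.sqrt_sq_eq_abs]
      exact Real.sqrt_le_sqrt (by nlinarith)
    linarith
  rw [Real.norm_eq_abs ((1 + |x|) * |φ x|), abs_of_nonneg (by positivity)]
  calc (1+|x|)*|φ x| ≤ (2*(1+x^2)^((1:ℝ)/2)) * (M * (1+x^2)^(-δ/2)) :=
        mul_le_mul h2 hφx (abs_nonneg _) (by positivity)
    _ = 2*M*((1+x^2)^((1:ℝ)/2) * (1+x^2)^(-δ/2)) := by ring
    _ = 2*M*(1+‖x‖^2)^(-(δ-1)/2) := by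
        rw [← Real.rpow_add hb]
        norm_num [Real.norm_eq_abs x, sq_abs]
        exact Or.inl (by ring_nf)

lemma aux_int2 (hφ : Measurable φ) (hδ : 5/2 < δ)
    (hdecay : ∀ x : ℝ, |φ x| ≤ M * Real.sqrt (1 + x ^ 2) ^ (-δ)) :
    Integrable φ := by
  refine (aux_int1 hφ hδ hdecay).mono' hφ.aestronglyMeasurable
    (Filter.Eventually.of_forall fun x => ?_)
  rw [Real.norm_eq_abs (φ x)]
  nlinarith [abs_nonneg (φ x), abs_nonneg x]

end aux

set_option maxHeartbeats 2000000 in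
/-- Lemma 3.5 (iv) of the paper: the gain of `λ⁻¹` in the rank-one symbol
`α/(λ(1 + αF^±(λ²)))`, case `d = 1`, `∫ φ ≠ 0`. -/
theorem rank_one_symbol_gain_d1 (φ : ℝ → ℝ) (M δ : ℝ) (hφ : Measurable φ)
    (hM : 0 < M) (hδ : 5/2 < δ)
    (hdecay : ∀ x : ℝ, |φ x| ≤ M * Real.sqrt (1 + x ^ 2) ^ (-δ))
    (hmean : (∫ x : ℝ, φ x) ≠ 0) :
    ∃ lam₀ ∈ Ioo (0:ℝ) 1, ∃ C > 0, ∀ α : ℝ, 0 < α →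
      ∀ σ : ℝ, (σ = 1 ∨ σ = -1) → ∀ l ∈ Ioo (0:ℝ) lam₀,
        1 + (α : ℂ) * resolventFormD1 σ φ l ≠ 0 ∧
        ‖(α : ℂ) / ((l : ℂ) * (1 + (α : ℂ) * resolventFormD1 σ φ l))‖ ≤ C ∧
        ‖deriv (fun s : ℝ =>
            (α : ℂ) / ((s : ℂ) * (1 + (α : ℂ) * resolventFormD1 σ φ s))) l‖ ≤ C * l⁻¹ := by
  have hψ : Integrable (fun x : ℝ => (1 + |x|) * |φ x|) := aux_int1 hφ hδ hdecay
  have hφi : Integrable φ := aux_int2 hφ hδ hdecay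
  set m : ℝ := ∫ x : ℝ, φ x with hm
  have hm2 : (0:ℝ) < m ^ 2 := (Ne.symm (pow_ne_zero 2 hmean)).lt_of_le (sq_nonneg m)
  set P : Measure (ℝ × ℝ) := (volume : Measure ℝ).prod volume with hP
  set bound : ℝ × ℝ → ℝ := fun p => |p.1 - p.2| * (|φ p.2| * |φ p.1|) with hbound
  have hrmeas : Measurable (fun p : ℝ × ℝ => |p.1 - p.2|) := (measurable_fst.sub measurable_snd).abs
  have hboundmeas : Measurable bound :=
    hrmeas.mul ((hφ.comp measurable_snd).abs.mul (hφ.comp measurable_fst).abs)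
  have hprodψ : Integrable (fun p : ℝ × ℝ => ((1 + |p.1|) * |φ p.1|) * ((1 + |p.2|) * |φ p.2|)) P :=
    hψ.mul_prod hψ
  have hboundint : Integrable bound P := by
    refine hprodψ.mono' hboundmeas.aestronglyMeasurable (Filter.Eventually.of_forall fun p => ?_)
    rw [Real.norm_eq_abs, abs_of_nonneg (by positivity)]
    have h1 : |p.1 - p.2| ≤ (1 + |p.1|) * (1 + |p.2|) := by
      have := abs_sub (p.1) (p.2)
      nlinarith [abs_nonneg p.1, abs_nonneg p.2, abs_sub_abs_le_abs_sub p.1 p.2,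
        abs_sub p.1 p.2]
    have h2 := mul_le_mul_of_nonneg_right h1 (mul_nonneg (abs_nonneg (φ p.1)) (abs_nonneg (φ p.2)))
    simp only [hbound]
    nlinarith [h2]
  set B : ℝ := ∫ p, bound p ∂P with hB
  have hB0 : 0 ≤ B := integral_nonneg fun p => by positivity
  set lam₀ : ℝ := min (1/2) (m ^ 2 / (2 * B + 2)) with hlam
  have hlam0pos : 0 < lam₀ := lt_min (by norm_num) (by positivity)
  have hlam0lt1 : lam₀ < 1 := lt_of_le_of_lt (min_le_left _ _) (by norm_num)
  set C : ℝ := 4 / m ^ 2 + 12 / m ^ 2 + 24 * B / m ^ 4 + 1 with hC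
  have hCpos : 0 < C := by positivity
  refine ⟨lam₀, ⟨hlam0pos, hlam0lt1⟩, C, hCpos, ?_⟩
  intro α hα σ hσ l hl
  obtain ⟨hl1, hl2⟩ := hl
  have hlne : (l:ℝ) ≠ 0 := ne_of_gt hl1
  have hσ1 : |σ| = 1 := by rcases hσ with h | h <;> simp [h]
  have hll1 : l < 1 := lt_trans hl2 hlam0lt1
  -- the kernel and its derivative
  set K : ℝ → ℝ × ℝ → ℂ := fun s p =>
    Complex.exp ((σ:ℂ) * Complex.I * (s:ℂ) * ((|p.1 - p.2| : ℝ) : ℂ)) *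
      (((φ p.2 : ℝ) : ℂ) * ((φ p.1 : ℝ) : ℂ)) with hK
  set K' : ℝ → ℝ × ℝ → ℂ := fun s p =>
    ((σ:ℂ) * Complex.I * ((|p.1 - p.2| : ℝ) : ℂ)) * K s p with hK'
  have hexparg : ∀ (s : ℝ) (r : ℝ), (σ:ℂ) * Complex.I * (s:ℂ) * (r:ℂ) = ((σ * s * r : ℝ) : ℂ) * Complex.I := by
    intro s r; push_cast; ring
  have hexpnorm : ∀ (s r : ℝ), ‖Complex.exp ((σ:ℂ) * Complex.I * (s:ℂ) * (r:ℂ))‖ = 1 := by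
    intro s r
    rw [hexparg s r, Complex.norm_exp_ofReal_mul_I]
  have hKnorm : ∀ (s : ℝ) (p : ℝ × ℝ), ‖K s p‖ = |φ p.2| * |φ p.1| := by
    intro s p
    simp only [hK, norm_mul, hexpnorm s (|p.1 - p.2|), Complex.norm_real, Real.norm_eq_abs,
      one_mul]
  have hK'norm : ∀ (s : ℝ) (p : ℝ × ℝ), ‖K' s p‖ = bound p := by
    intro s p
    simp only [hK', norm_mul, hKnorm s p, Complex.norm_I,
      Complex.norm_real, Real.norm_eq_abs, mul_one, abs_abs]
    rw [hσ1]
    ring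
  have hKmeas : ∀ s : ℝ, AEStronglyMeasurable (K s) P := by
    intro s
    exact (((Complex.measurable_ofReal.comp hrmeas).const_mul
      ((σ:ℂ) * Complex.I * (s:ℂ))).cexp.mul
      ((Complex.measurable_ofReal.comp (hφ.comp measurable_snd)).mul
        (Complex.measurable_ofReal.comp (hφ.comp measurable_fst)))).aestronglyMeasurable
  have hK'meas : ∀ s : ℝ, AEStronglyMeasurable (K' s) P := by
    intro s
    refine (((Complex.measurable_ofReal.comp hrmeas).const_mul ((σ:ℂ) * Complex.I)).mul ?_).aestronglyMeasurable
    exact ((Complex.measurable_ofReal.comp hrmeas).const_mul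
      ((σ:ℂ) * Complex.I * (s:ℂ))).cexp.mul
      ((Complex.measurable_ofReal.comp (hφ.comp measurable_snd)).mul
        (Complex.measurable_ofReal.comp (hφ.comp measurable_fst)))
  have hφφ : Integrable (fun p : ℝ × ℝ => |φ p.1| * |φ p.2|) P := hφi.abs.mul_prod hφi.abs
  have hKint : ∀ s : ℝ, Integrable (K s) P := by
    intro s
    refine hφφ.mono' (hKmeas s) (Filter.Eventually.of_forall fun p => ?_)
    rw [hKnorm s p]
    exact le_of_eq (mul_comm _ _)
  set G : ℝ → ℂ := fun s => ∫ p, K s p ∂P with hG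
  set G' : ℝ → ℂ := fun s => ∫ p, K' s p ∂P with hG'
  have hG'B : ∀ s : ℝ, ‖G' s‖ ≤ B := by
    intro s
    refine norm_integral_le_of_norm_le hboundint (Filter.Eventually.of_forall fun p => ?_)
    exact le_of_eq (hK'norm s p)
  have hGderiv : ∀ t : ℝ, HasDerivAt G (G' t) t := by
    intro t
    refine (hasDerivAt_integral_of_dominated_loc_of_deriv_le (Metric.ball_mem_nhds t one_pos)
      (Filter.Eventually.of_forall fun s => hKmeas s) (hKint t) (hK'meas t)
      (Filter.Eventually.of_forall fun p s _ => le_of_eq (hK'norm s p)) hboundint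
      (Filter.Eventually.of_forall fun p s _ => ?_)).2
    have h0 : HasDerivAt (fun u : ℝ => ((u : ℝ) : ℂ)) 1 s := by
      exact Complex.ofRealCLM.hasDerivAt (x := s)
    have h1 := ((h0.const_mul ((σ:ℂ) * Complex.I)).mul_const
      (((|p.1 - p.2| : ℝ) : ℂ))).cexp
    have h2 := (h1.mul_const (((φ p.2 : ℝ) : ℂ) * ((φ p.1 : ℝ) : ℂ)))
    refine (show HasDerivAt (fun x => K x p) _ s from h2).congr_deriv ?_
    simp only [hK', hK]
    ring
  have hG0 : G 0 = ((m ^ 2 : ℝ) : ℂ) := by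
    have hKzero : ∀ p : ℝ × ℝ, K 0 p = ((φ p.1 : ℝ) : ℂ) * ((φ p.2 : ℝ) : ℂ) := by
      intro p; simp only [hK, Complex.ofReal_zero, mul_zero, zero_mul, Complex.exp_zero, one_mul]
      ring
    calc G 0 = ∫ p, ((φ p.1 : ℝ) : ℂ) * ((φ p.2 : ℝ) : ℂ) ∂P := by
          simp only [hG]; exact integral_congr_ae (Filter.Eventually.of_forall hKzero)
      _ = (∫ x : ℝ, ((φ x : ℝ) : ℂ)) * ∫ y : ℝ, ((φ y : ℝ) : ℂ) := by
          rw [hP]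
          exact integral_prod_mul (fun x : ℝ => ((φ x : ℝ) : ℂ)) (fun y : ℝ => ((φ y : ℝ) : ℂ))
      _ = ((m : ℝ) : ℂ) * ((m : ℝ) : ℂ) := by
          rw [hm]; exact congrArg₂ (· * ·) integral_ofReal integral_ofReal
      _ = ((m ^ 2 : ℝ) : ℂ) := by push_cast; ring
  have hGnear : ∀ t ∈ Icc (0:ℝ) 1, ‖G t - ((m ^ 2 : ℝ) : ℂ)‖ ≤ B * t := by
    intro t ht
    have h := norm_image_sub_le_of_norm_deriv_le_segment' (f := G) (f' := G') (a := 0) (b := 1)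
      (C := B) (fun x _ => (hGderiv x).hasDerivWithinAt) (fun x _ => hG'B x) t ht
    rw [hG0] at h
    simpa using h
  have hBl : B * l ≤ m ^ 2 / 2 := by
    have h1 : l ≤ m ^ 2 / (2 * B + 2) := le_of_lt (lt_of_lt_of_le hl2 (min_le_right _ _))
    have h2 : B * l ≤ B * (m ^ 2 / (2 * B + 2)) := mul_le_mul_of_nonneg_left h1 hB0
    have h3 : B * (m ^ 2 / (2 * B + 2)) ≤ m ^ 2 / 2 := by
      rw [mul_div_assoc', div_le_div_iff₀ (by positivity) (by norm_num)]
      nlinarith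
    linarith
  have hGl := hGnear l ⟨hl1.le, hll1.le⟩
  have hrediff : |(G l).re - m ^ 2| ≤ B * l := by
    have h := Complex.abs_re_le_norm (G l - ((m ^ 2 : ℝ) : ℂ))
    simp only [Complex.sub_re, Complex.ofReal_re] at h
    linarith
  have hre : m ^ 2 / 2 ≤ (G l).re := by
    obtain ⟨h1, h2⟩ := abs_le.1 hrediff; linarith
  have himG : |(G l).im| ≤ B * l := by
    have h := Complex.abs_im_le_norm (G l - ((m ^ 2 : ℝ) : ℂ))
    simp only [Complex.sub_im, Complex.ofReal_im, sub_zero] at h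
    linarith
  obtain ⟨D, hD⟩ : ∃ D : ℝ → ℂ, D = fun s : ℝ => 2 * (s : ℂ) + (α : ℂ) * (σ : ℂ) * Complex.I * G s :=
    ⟨_, rfl⟩
  have hDim : (D l).im = α * σ * (G l).re := by
    simp [hD, Complex.mul_im, Complex.mul_re]
    try ring
  have hDre : (D l).re = 2 * l - α * σ * (G l).im := by
    simp [hD, Complex.mul_im, Complex.mul_re]
    try ring
  have hDlow : α * m ^ 2 / 2 ≤ ‖D l‖ := by
    have h1 : α * m ^ 2 / 2 ≤ |(D l).im| := by
      rw [hDim, abs_mul, abs_mul, hσ1, mul_one,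
        abs_of_nonneg hα.le, abs_of_nonneg (le_trans (by positivity) hre)]
      nlinarith
    refine le_trans h1 ?_
    exact Complex.abs_im_le_norm (D l)
  have hDpos : 0 < ‖D l‖ := lt_of_lt_of_le (by positivity) hDlow
  have hDne : D l ≠ 0 := by
    intro h; rw [h, norm_zero] at hDpos; exact lt_irrefl 0 hDpos
  have hR : ∀ s : ℝ, resolventFormD1 σ φ s = ((σ:ℂ) * Complex.I / (2 * (s:ℂ))) * G s := by
    intro s
    rw [resolventFormD1]
    have hinteq : ∀ x y : ℝ,
        ((σ:ℂ) * Complex.I / (2 * (s:ℂ))) *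
          Complex.exp ((σ:ℂ) * Complex.I * (s:ℂ) * ((|x - y| : ℝ) : ℂ)) *
          ((φ y : ℝ) : ℂ) * ((φ x : ℝ) : ℂ) =
        ((σ:ℂ) * Complex.I / (2 * (s:ℂ))) *
          (Complex.exp ((σ:ℂ) * Complex.I * (s:ℂ) * ((|x - y| : ℝ) : ℂ)) *
            (((φ y : ℝ) : ℂ) * ((φ x : ℝ) : ℂ))) := by
      intro x y; ring
    simp_rw [hinteq, integral_const_mul]
    congr 1
    exact MeasureTheory.integral_integral (μ := volume) (ν := volume)
      (f := fun x y => Complex.exp ((σ:ℂ) * Complex.I * (s:ℂ) * ((|x - y| : ℝ) : ℂ)) *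
        (((φ y : ℝ) : ℂ) * ((φ x : ℝ) : ℂ))) (hKint s)
  have hrel : ∀ s : ℝ, s ≠ 0 → (s:ℂ) * (1 + (α:ℂ) * resolventFormD1 σ φ s) = D s / 2 := by
    intro s hs
    rw [hR s, hD]
    have hsC : (s:ℂ) ≠ 0 := Complex.ofReal_ne_zero.2 hs
    field_simp
  have hne1 : 1 + (α:ℂ) * resolventFormD1 σ φ l ≠ 0 := by
    intro h
    apply hDne
    have h2 := hrel l hlne
    rw [h, mul_zero] at h2
    rcases div_eq_zero_iff.1 h2.symm with h4 | h4
    · exact h4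
    · exact absurd h4 two_ne_zero
  refine ⟨hne1, ?_, ?_⟩
  · rw [hrel l hlne]
    have hval : ‖(α:ℂ) / (D l / 2)‖ = α / (‖D l‖ / 2) := by
      rw [norm_div, norm_div, Complex.norm_real, Real.norm_eq_abs, abs_of_pos hα]
      norm_num
    rw [hval]
    have h4 : α / (‖D l‖ / 2) ≤ 4 / m ^ 2 := by
      rw [div_le_div_iff₀ (by linarith [hDpos]) hm2]
      nlinarith [hDlow]
    have h5 : (0:ℝ) ≤ 24 * B / m ^ 4 := by positivity
    have h6 : (0:ℝ) ≤ 12 / m ^ 2 := by positivity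
    rw [hC]
    linarith
  · have hfeq : (fun s : ℝ => (α:ℂ) / ((s:ℂ) * (1 + (α:ℂ) * resolventFormD1 σ φ s)))
        =ᶠ[nhds l] fun s : ℝ => (α:ℂ) / (D s / 2) := by
      filter_upwards [isOpen_Ioi.mem_nhds (show l ∈ Ioi (0:ℝ) from hl1)] with s hs
      rw [hrel s (ne_of_gt hs)]
    rw [Filter.EventuallyEq.deriv_eq hfeq]
    have hDderiv : HasDerivAt D (2 + (α:ℂ) * (σ:ℂ) * Complex.I * G' l) l := by
      have h1 : HasDerivAt (fun s : ℝ => 2 * ((s : ℝ) : ℂ)) 2 l := by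
        simpa using (Complex.ofRealCLM.hasDerivAt (x := l)).const_mul (2:ℂ)
      have h2 := (hGderiv l).const_mul ((α:ℂ) * (σ:ℂ) * Complex.I)
      rw [hD]; exact h1.add h2
    have hD2ne : D l / 2 ≠ 0 := div_ne_zero hDne two_ne_zero
    have hq := (hasDerivAt_const l ((α:ℝ):ℂ)).div (hDderiv.div_const 2) hD2ne
    rw [(show HasDerivAt (fun s : ℝ => (α:ℂ) / (D s / 2)) _ l from hq).deriv]
    have hNle : ‖(2:ℂ) + (α:ℂ) * (σ:ℂ) * Complex.I * G' l‖ ≤ 2 + α * B := by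
      refine le_trans (norm_add_le _ _) ?_
      have h7 : ‖(α:ℂ) * (σ:ℂ) * Complex.I * G' l‖ = α * ‖G' l‖ := by
        rw [norm_mul, norm_mul, norm_mul, Complex.norm_real, Complex.norm_real,
          Real.norm_eq_abs, Real.norm_eq_abs, abs_of_pos hα, hσ1, Complex.norm_I]
        ring
      have h2n : ‖(2:ℂ)‖ = (2:ℝ) := by norm_num
      rw [h7, h2n]
      have h8 := mul_le_mul_of_nonneg_left (hG'B l) hα.le
      linarith
    have hEnorm : ‖(0 * (D l / 2) - (α:ℂ) * ((2 + (α:ℂ) * (σ:ℂ) * Complex.I * G' l) / 2)) /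
        (D l / 2) ^ 2‖ = 2 * α * ‖(2:ℂ) + (α:ℂ) * (σ:ℂ) * Complex.I * G' l‖ / ‖D l‖ ^ 2 := by
      rw [zero_mul, zero_sub, neg_div, norm_neg, norm_div, norm_pow, norm_div, norm_mul, norm_div,
        Complex.norm_real, Real.norm_eq_abs, abs_of_pos hα]
      have h2n : ‖(2:ℂ)‖ = 2 := by norm_num
      rw [h2n]
      field_simp
    rw [hEnorm]
    set x := ‖(2:ℂ) + (α:ℂ) * (σ:ℂ) * Complex.I * G' l‖ with hx
    have hx0 : 0 ≤ x := norm_nonneg _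
    set d := ‖D l‖ with hd
    rcases le_or_gt (α * B) 1 with hcase | hcase
    · have h5 : |α * σ * (G l).im| ≤ l := by
        rw [abs_mul, abs_mul, hσ1, mul_one, abs_of_pos hα]
        have h9 := mul_le_mul_of_nonneg_left himG hα.le
        nlinarith
      have h6 : l ≤ (D l).re := by
        rw [hDre]
        obtain ⟨ha, hb⟩ := abs_le.1 h5
        linarith
      have hd2 : l ≤ d := by
        refine le_trans h6 (le_trans (le_abs_self _) ?_)
        rw [hd]
        exact Complex.abs_re_le_norm (D l)
      have hprod : l * (α * m ^ 2 / 2) ≤ d ^ 2 := by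
        have h10 := mul_le_mul hd2 hDlow (by positivity) (le_trans hl1.le hd2)
        nlinarith
      calc 2 * α * x / d ^ 2 ≤ 2 * α * (2 + α * B) / (l * (α * m ^ 2 / 2)) :=
            div_le_div₀ (by positivity) (by nlinarith) (by positivity) hprod
        _ = (8 + 4 * (α * B)) / m ^ 2 * l⁻¹ := by field_simp; ring
        _ ≤ 12 / m ^ 2 * l⁻¹ := by gcongr <;> linarith
        _ ≤ C * l⁻¹ := by
            have h11 : 12 / m ^ 2 ≤ C := by
              rw [hC]
              have : (0:ℝ) ≤ 4 / m ^ 2 := by positivity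
              have : (0:ℝ) ≤ 24 * B / m ^ 4 := by positivity
              linarith
            gcongr
    · have hB1 : 0 < B := by nlinarith
      have hprod : (α * m ^ 2 / 2) ^ 2 ≤ d ^ 2 :=
        pow_le_pow_left₀ (by nlinarith) hDlow 2
      have h8 : (1:ℝ) ≤ l⁻¹ := by
        rw [one_le_inv_iff₀]
        exact ⟨hl1, hll1.le⟩
      calc 2 * α * x / d ^ 2 ≤ 2 * α * (2 + α * B) / ((α * m ^ 2 / 2) ^ 2) :=
            div_le_div₀ (by positivity) (by nlinarith) (by positivity) hprod
        _ = (16 * α + 8 * α ^ 2 * B) / (α ^ 2 * m ^ 4) := by field_simp; ring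
        _ ≤ 24 * B / m ^ 4 := by
            rw [div_le_div_iff₀ (by positivity) (by positivity)]
            nlinarith
        _ ≤ (24 * B / m ^ 4) * l⁻¹ := le_mul_of_one_le_right (by positivity) h8
        _ ≤ C * l⁻¹ := by
            have h11 : 24 * B / m ^ 4 ≤ C := by
              rw [hC]
              have : (0:ℝ) ≤ 4 / m ^ 2 := by positivity
              have : (0:ℝ) ≤ 12 / m ^ 2 := by positivity
              linarith
            gcongr
end

section
/- Let d ≥ 1, let z ∈ ℂ \ [0, ∞), and let R₀(z) : L²(ℝ^d) → L²(ℝ^d) be the bounded Fourier multiplier operator defined by 𝓕(R₀(z)f)(ξ) = (|ξ|² − z)^{−1} 𝓕f(ξ), where 𝓕 is the Fourier–Plancherel transform on L²(ℝ^d). Let φ₁, …, φ_N ∈ L²(ℝ^d) be an orthonormal family and P := Σ_{j=1}^N ⟨·, φ_j⟩ φ_j the orthogonal projection onto span{φ₁, …, φ_N}. If u ∈ span{φ₁, …, φ_N} satisfies u + P R₀(z) P u = 0, then u = 0; consequently, the map u ↦ u + P R₀(z) P u is a bijection of span{φ₁, …, φ_N} onto itself. -/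
open MeasureTheory

section ClaimOneAux

variable {d : ℕ}

/-- Lower bound on the distance from `z ∉ [0,∞)` to the nonnegative reals. -/
lemma claim_one_exists_delta (z : ℂ) (hz : ∀ r : ℝ, 0 ≤ r → z ≠ (r : ℂ)) :
    ∃ δ : ℝ, 0 < δ ∧ ∀ r : ℝ, 0 ≤ r → δ ≤ ‖(r : ℂ) - z‖ := by
  by_cases him : z.im = 0
  · have hre : z.re < 0 := by
      by_contra h
      push_neg at h
      exact hz z.re h (by apply Complex.ext <;> simp [him])
    refine ⟨-z.re, by linarith, fun r hr => ?_⟩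
    have h1 : |((r : ℂ) - z).re| ≤ ‖(r : ℂ) - z‖ := Complex.abs_re_le_norm _
    have h2 : ((r : ℂ) - z).re = r - z.re := by simp
    rw [h2] at h1
    have : -z.re ≤ |r - z.re| := by
      rw [abs_of_nonneg (by linarith)]; linarith
    linarith
  · refine ⟨|z.im|, abs_pos.mpr him, fun r hr => ?_⟩
    have h1 : |((r : ℂ) - z).im| ≤ ‖(r : ℂ) - z‖ := Complex.abs_im_le_norm _
    have h2 : ((r : ℂ) - z).im = -z.im := by simp
    rw [h2, abs_neg] at h1
    exact h1

/-- The multiplier symbol of the free resolvent. -/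
noncomputable def claimSymb (z : ℂ) (ξ : EuclideanSpace ℝ (Fin d)) : ℂ :=
  (((‖ξ‖ ^ 2 : ℝ) : ℂ) - z)⁻¹

lemma claimSymb_norm_le {z : ℂ} {δ : ℝ} (hδ : 0 < δ)
    (hδ2 : ∀ r : ℝ, 0 ≤ r → δ ≤ ‖(r : ℂ) - z‖) (ξ : EuclideanSpace ℝ (Fin d)) :
    ‖claimSymb z ξ‖ ≤ δ⁻¹ := by
  rw [claimSymb, norm_inv]
  have h := hδ2 (‖ξ‖ ^ 2) (sq_nonneg _)
  exact inv_anti₀ hδ h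

lemma claimSymb_continuous {z : ℂ} {δ : ℝ} (hδ : 0 < δ)
    (hδ2 : ∀ r : ℝ, 0 ≤ r → δ ≤ ‖(r : ℂ) - z‖) :
    Continuous (claimSymb z (d := d)) := by
  apply Continuous.inv₀
  · fun_prop
  · intro ξ h
    have h2 := hδ2 (‖ξ‖ ^ 2) (sq_nonneg _)
    rw [h] at h2
    simp at h2; linarith

lemma claim_memM (z : ℂ) {δ : ℝ} (hδ : 0 < δ)
    (hδ2 : ∀ r : ℝ, 0 ≤ r → δ ≤ ‖(r : ℂ) - z‖)
    (f : Lp ℂ 2 (volume : Measure (EuclideanSpace ℝ (Fin d)))) :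
    MemLp (fun ξ => claimSymb z ξ * (f : EuclideanSpace ℝ (Fin d) → ℂ) ξ) 2 volume :=
  MemLp.of_le_mul (Lp.memLp f)
    (((claimSymb_continuous hδ hδ2).aestronglyMeasurable).mul (Lp.aestronglyMeasurable f))
    (Filter.Eventually.of_forall fun ξ => by
      rw [norm_mul]
      exact mul_le_mul_of_nonneg_right (claimSymb_norm_le hδ hδ2 ξ) (norm_nonneg _))

/-- The multiplication operator by the resolvent symbol, as a linear map on `L²`. -/
noncomputable def claimMulOp (z : ℂ) {δ : ℝ} (hδ : 0 < δ)
    (hδ2 : ∀ r : ℝ, 0 ≤ r → δ ≤ ‖(r : ℂ) - z‖) :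
    Lp ℂ 2 (volume : Measure (EuclideanSpace ℝ (Fin d))) →ₗ[ℂ]
    Lp ℂ 2 (volume : Measure (EuclideanSpace ℝ (Fin d))) where
  toFun f := (claim_memM z hδ hδ2 f).toLp _
  map_add' f g := by
    apply Lp.ext
    filter_upwards [MemLp.coeFn_toLp (claim_memM z hδ hδ2 (f + g)),
      MemLp.coeFn_toLp (claim_memM z hδ hδ2 f),
      MemLp.coeFn_toLp (claim_memM z hδ hδ2 g),
      Lp.coeFn_add f g,
      Lp.coeFn_add ((claim_memM z hδ hδ2 f).toLp _) ((claim_memM z hδ hδ2 g).toLp _)]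
      with ξ h1 h2 h3 h4 h5
    rw [h1, h5, Pi.add_apply, h2, h3, h4, Pi.add_apply]
    ring
  map_smul' a f := by
    apply Lp.ext
    filter_upwards [MemLp.coeFn_toLp (claim_memM z hδ hδ2 (a • f)),
      MemLp.coeFn_toLp (claim_memM z hδ hδ2 f),
      Lp.coeFn_smul a f,
      Lp.coeFn_smul a ((claim_memM z hδ hδ2 f).toLp _)]
      with ξ h1 h2 h3 h4
    rw [RingHom.id_apply, h1, h4, Pi.smul_apply, h2, h3, Pi.smul_apply]
    simp [smul_eq_mul]
    ring

lemma claimMulOp_coeFn (z : ℂ) {δ : ℝ} (hδ : 0 < δ)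
    (hδ2 : ∀ r : ℝ, 0 ≤ r → δ ≤ ‖(r : ℂ) - z‖)
    (f : Lp ℂ 2 (volume : Measure (EuclideanSpace ℝ (Fin d)))) :
    (claimMulOp z hδ hδ2 f : EuclideanSpace ℝ (Fin d) → ℂ) =ᵐ[volume]
      fun ξ => (((‖ξ‖ ^ 2 : ℝ) : ℂ) - z)⁻¹ * (f : EuclideanSpace ℝ (Fin d) → ℂ) ξ :=
  (claim_memM z hδ hδ2 f).coeFn_toLp

/-- The core analytic fact. -/
lemma claim_analytic_core (d : ℕ) (z : ℂ)
    (hz : ∀ r : ℝ, 0 ≤ r → z ≠ (r : ℂ))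
    {δ : ℝ} (hδ : 0 < δ) (hδ2 : ∀ r : ℝ, 0 ≤ r → δ ≤ ‖(r : ℂ) - z‖)
    (𝓕 : Lp ℂ 2 (volume : Measure (EuclideanSpace ℝ (Fin d))) ≃ₗᵢ[ℂ]
         Lp ℂ 2 (volume : Measure (EuclideanSpace ℝ (Fin d))))
    (u v : Lp ℂ 2 (volume : Measure (EuclideanSpace ℝ (Fin d))))
    (hv : (𝓕 v : EuclideanSpace ℝ (Fin d) → ℂ) =ᵐ[volume]
        fun ξ => (((‖ξ‖ ^ 2 : ℝ) : ℂ) - z)⁻¹ * (𝓕 u : EuclideanSpace ℝ (Fin d) → ℂ) ξ)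
    (hzero : (inner ℂ u u : ℂ) + inner ℂ v u = 0) : u = 0 := by
  classical
  set F : EuclideanSpace ℝ (Fin d) → ℂ := (𝓕 u : EuclideanSpace ℝ (Fin d) → ℂ) with hF
  set G : EuclideanSpace ℝ (Fin d) → ℂ := (𝓕 v : EuclideanSpace ℝ (Fin d) → ℂ) with hG
  set w : EuclideanSpace ℝ (Fin d) → ℂ := fun ξ => (((‖ξ‖ ^ 2 : ℝ) : ℂ) - z) with hw
  have hwim : ∀ ξ, (w ξ).im = -z.im := by
    intro ξ; simp [hw, ← Complex.ofReal_pow]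
  have hwre : ∀ ξ, (w ξ).re = ‖ξ‖ ^ 2 - z.re := by
    intro ξ; simp [hw, ← Complex.ofReal_pow]
  have hwne : ∀ ξ, w ξ ≠ 0 := by
    intro ξ h
    have h2 := hδ2 (‖ξ‖ ^ 2) (sq_nonneg _)
    rw [show ((‖ξ‖^2 : ℝ) : ℂ) - z = w ξ from rfl, h] at h2
    simp at h2; linarith
  have hwpos : ∀ ξ, 0 < Complex.normSq (w ξ) := fun ξ => Complex.normSq_pos.mpr (hwne ξ)
  have h1 : (inner ℂ u u : ℂ) = ∫ ξ, (inner ℂ (F ξ) (F ξ) : ℂ) := by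
    rw [← 𝓕.inner_map_map u u, L2.inner_def]
  have h2 : (inner ℂ v u : ℂ) = ∫ ξ, (inner ℂ (G ξ) (F ξ) : ℂ) := by
    rw [← 𝓕.inner_map_map v u, L2.inner_def]
  have hInt1 : Integrable (fun ξ => (inner ℂ (F ξ) (F ξ) : ℂ)) volume := L2.integrable_inner _ _
  have hInt2 : Integrable (fun ξ => (inner ℂ (G ξ) (F ξ) : ℂ)) volume := L2.integrable_inner _ _
  set h : EuclideanSpace ℝ (Fin d) → ℂ :=
    fun ξ => (1 + (starRingEnd ℂ) ((w ξ)⁻¹)) * (Complex.normSq (F ξ) : ℂ) with hh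
  have hre' : ∀ ξ, (h ξ).re = (1 + (w ξ).re / Complex.normSq (w ξ)) * Complex.normSq (F ξ) := by
    intro ξ
    simp [hh, Complex.mul_re, Complex.add_re, Complex.add_im, Complex.inv_re]
  have him' : ∀ ξ, (h ξ).im = -z.im * (Complex.normSq (F ξ) / Complex.normSq (w ξ)) := by
    intro ξ
    have e1 : (h ξ).im = (1 + (starRingEnd ℂ) ((w ξ)⁻¹)).im * Complex.normSq (F ξ) := by
      simp [hh, Complex.mul_im]
    have e2 : (1 + (starRingEnd ℂ) ((w ξ)⁻¹)).im = -z.im / Complex.normSq (w ξ) := by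
      simp only [Complex.add_im, Complex.one_im, Complex.conj_im, Complex.inv_im, hwim,
        zero_add, neg_div, neg_neg]
    rw [e1, e2]; ring
  have hae : (fun ξ => (inner ℂ (F ξ) (F ξ) : ℂ) + (inner ℂ (G ξ) (F ξ) : ℂ)) =ᵐ[volume] h := by
    filter_upwards [hv] with ξ hξ
    have hcc : (starRingEnd ℂ) (F ξ) * F ξ = (Complex.normSq (F ξ) : ℂ) := by
      rw [mul_comm, Complex.mul_conj]
    show (inner ℂ (F ξ) (F ξ) : ℂ) + (inner ℂ (G ξ) (F ξ) : ℂ)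
        = (1 + (starRingEnd ℂ) ((w ξ)⁻¹)) * (Complex.normSq (F ξ) : ℂ)
    rw [RCLike.inner_apply', RCLike.inner_apply', hξ]
    rw [show (((‖ξ‖ ^ 2 : ℝ) : ℂ) - z) = w ξ from rfl, map_mul, mul_assoc, hcc]
    ring
  have hIntH : Integrable h volume := (hInt1.add hInt2).congr hae
  have hint : ∫ ξ, h ξ = 0 := by
    rw [← integral_congr_ae hae, integral_add hInt1 hInt2, ← h1, ← h2, hzero]
  have hFzero : F =ᵐ[volume] 0 := by
    by_cases him : z.im = 0
    · have hre : z.re < 0 := by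
        by_contra hcon
        push_neg at hcon
        exact hz z.re hcon (by apply Complex.ext <;> simp [him])
      have hrepos : ∀ ξ, Complex.normSq (F ξ) ≤ (h ξ).re := by
        intro ξ
        rw [hre']
        have hwre2 : 0 ≤ (w ξ).re := by rw [hwre]; nlinarith [sq_nonneg ‖ξ‖]
        nlinarith [Complex.normSq_nonneg (F ξ), hwpos ξ,
          div_nonneg hwre2 (le_of_lt (hwpos ξ))]
      have hintre : ∫ ξ, (h ξ).re = 0 := by
        have := integral_re hIntH
        simp only [RCLike.re_eq_complex_re] at this
        rw [this, hint, Complex.zero_re]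
      have hnn : 0 ≤ fun ξ => (h ξ).re :=
        fun ξ => le_trans (Complex.normSq_nonneg _) (hrepos ξ)
      have hz0 := (integral_eq_zero_iff_of_nonneg hnn hIntH.re).mp hintre
      filter_upwards [hz0] with ξ hξ
      have h0 : (h ξ).re = 0 := hξ
      have : Complex.normSq (F ξ) = 0 :=
        le_antisymm (h0 ▸ hrepos ξ) (Complex.normSq_nonneg _)
      exact Complex.normSq_eq_zero.mp this
    · set g : EuclideanSpace ℝ (Fin d) → ℝ :=
        fun ξ => Complex.normSq (F ξ) / Complex.normSq (w ξ) with hg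
      have hintim : ∫ ξ, (h ξ).im = 0 := by
        have := integral_im hIntH
        simp only [RCLike.im_eq_complex_im] at this
        rw [this, hint, Complex.zero_im]
      have hIntg : Integrable g volume := by
        have : g = fun ξ => (-z.im)⁻¹ * (h ξ).im := by
          funext ξ; rw [him' ξ, hg]; field_simp
        rw [this]
        exact hIntH.im.const_mul _
      have hintg : ∫ ξ, g ξ = 0 := by
        have e : ∫ ξ, (h ξ).im = -z.im * ∫ ξ, g ξ := by
          simp_rw [him']
          exact integral_const_mul _ _
        rw [e] at hintim
        rcases mul_eq_zero.mp hintim with h' | h'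
        · exact absurd (by linarith [neg_eq_zero.mp h']) him
        · exact h'
      have hnn : 0 ≤ g := fun ξ => div_nonneg (Complex.normSq_nonneg _) (Complex.normSq_nonneg _)
      have hz0 := (integral_eq_zero_iff_of_nonneg hnn hIntg).mp hintg
      filter_upwards [hz0] with ξ hξ
      have h0 : Complex.normSq (F ξ) / Complex.normSq (w ξ) = 0 := hξ
      rw [div_eq_zero_iff] at h0
      rcases h0 with h0 | h0
      · exact Complex.normSq_eq_zero.mp h0
      · exact absurd h0 (hwpos ξ).ne'
  have : 𝓕 u = 0 := Lp.eq_zero_iff_ae_eq_zero.mpr hFzero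
  exact 𝓕.map_eq_zero_iff.mp this

/-- Injectivity statement, combining the algebraic and analytic pieces. -/
lemma claim_key_inj (d : ℕ) (z : ℂ)
    (hz : ∀ r : ℝ, 0 ≤ r → z ≠ (r : ℂ))
    {δ : ℝ} (hδ : 0 < δ) (hδ2 : ∀ r : ℝ, 0 ≤ r → δ ≤ ‖(r : ℂ) - z‖)
    (𝓕 : Lp ℂ 2 (volume : Measure (EuclideanSpace ℝ (Fin d))) ≃ₗᵢ[ℂ]
         Lp ℂ 2 (volume : Measure (EuclideanSpace ℝ (Fin d))))
    (N : ℕ) (φ : Fin N → Lp ℂ 2 (volume : Measure (EuclideanSpace ℝ (Fin d))))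
    (hφ : Orthonormal ℂ φ)
    (u v : Lp ℂ 2 (volume : Measure (EuclideanSpace ℝ (Fin d))))
    (hu : u ∈ Submodule.span ℂ (Set.range φ))
    (hv : (𝓕 v : EuclideanSpace ℝ (Fin d) → ℂ) =ᵐ[volume]
        fun ξ => (((‖ξ‖ ^ 2 : ℝ) : ℂ) - z)⁻¹ * (𝓕 u : EuclideanSpace ℝ (Fin d) → ℂ) ξ)
    (heq : u + ∑ j, (inner ℂ (φ j) v : ℂ) • φ j = 0) : u = 0 := by
  classical
  obtain ⟨c, hc⟩ := (Submodule.mem_span_range_iff_exists_fun ℂ).mp hu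
  have hPvu : (inner ℂ (∑ j, (inner ℂ (φ j) v : ℂ) • φ j) u : ℂ) = inner ℂ v u := by
    conv_lhs => rw [← hc]
    conv_rhs => rw [← hc]
    rw [sum_inner, inner_sum]
    refine Finset.sum_congr rfl fun j _ => ?_
    rw [inner_smul_left, inner_smul_right, hφ.inner_right_fintype, inner_conj_symm, mul_comm]
  have hzero : (inner ℂ u u : ℂ) + inner ℂ v u = 0 := by
    have := congrArg (fun w => (inner ℂ w u : ℂ)) heq
    simpa [inner_add_left, hPvu] using this
  exact claim_analytic_core d z hz hδ hδ2 𝓕 u v hv hzero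

end ClaimOneAux

section ClaimOneSurj

variable {d : ℕ}

/-- The free resolvent as a linear map. -/
noncomputable def claimR0 (z : ℂ) {δ : ℝ} (hδ : 0 < δ)
    (hδ2 : ∀ r : ℝ, 0 ≤ r → δ ≤ ‖(r : ℂ) - z‖)
    (𝓕 : Lp ℂ 2 (volume : Measure (EuclideanSpace ℝ (Fin d))) ≃ₗᵢ[ℂ]
         Lp ℂ 2 (volume : Measure (EuclideanSpace ℝ (Fin d)))) :
    Lp ℂ 2 (volume : Measure (EuclideanSpace ℝ (Fin d))) →ₗ[ℂ]
    Lp ℂ 2 (volume : Measure (EuclideanSpace ℝ (Fin d))) :=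
  (𝓕.symm.toLinearEquiv.toLinearMap).comp
    ((claimMulOp z hδ hδ2).comp 𝓕.toLinearEquiv.toLinearMap)

lemma claimR0_spec (z : ℂ) {δ : ℝ} (hδ : 0 < δ)
    (hδ2 : ∀ r : ℝ, 0 ≤ r → δ ≤ ‖(r : ℂ) - z‖)
    (𝓕 : Lp ℂ 2 (volume : Measure (EuclideanSpace ℝ (Fin d))) ≃ₗᵢ[ℂ]
         Lp ℂ 2 (volume : Measure (EuclideanSpace ℝ (Fin d))))
    (u : Lp ℂ 2 (volume : Measure (EuclideanSpace ℝ (Fin d)))) :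
    (𝓕 (claimR0 z hδ hδ2 𝓕 u) : EuclideanSpace ℝ (Fin d) → ℂ) =ᵐ[volume]
      fun ξ => (((‖ξ‖ ^ 2 : ℝ) : ℂ) - z)⁻¹ * (𝓕 u : EuclideanSpace ℝ (Fin d) → ℂ) ξ := by
  have : 𝓕 (claimR0 z hδ hδ2 𝓕 u) = claimMulOp z hδ hδ2 (𝓕 u) := by
    simp [claimR0]
  rw [this]
  exact claimMulOp_coeFn z hδ hδ2 (𝓕 u)

/-- The orthogonal projection onto the span, as a linear map into the span. -/
noncomputable def claimQ {N : ℕ}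
    (φ : Fin N → Lp ℂ 2 (volume : Measure (EuclideanSpace ℝ (Fin d)))) :
    Lp ℂ 2 (volume : Measure (EuclideanSpace ℝ (Fin d))) →ₗ[ℂ]
    Submodule.span ℂ (Set.range φ) where
  toFun v := ⟨∑ j, (inner ℂ (φ j) v : ℂ) • φ j,
    Submodule.sum_mem _ fun j _ =>
      Submodule.smul_mem _ _ (Submodule.subset_span ⟨j, rfl⟩)⟩
  map_add' a b := by
    apply Subtype.ext
    simp [inner_add_right, add_smul, Finset.sum_add_distrib]
  map_smul' a b := by
    apply Subtype.ext
    simp [inner_smul_right, smul_smul, Finset.smul_sum]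

/-- The map `u ↦ u + P R₀(z) P u` on the span. -/
noncomputable def claimT (z : ℂ) {δ : ℝ} (hδ : 0 < δ)
    (hδ2 : ∀ r : ℝ, 0 ≤ r → δ ≤ ‖(r : ℂ) - z‖)
    (𝓕 : Lp ℂ 2 (volume : Measure (EuclideanSpace ℝ (Fin d))) ≃ₗᵢ[ℂ]
         Lp ℂ 2 (volume : Measure (EuclideanSpace ℝ (Fin d))))
    {N : ℕ} (φ : Fin N → Lp ℂ 2 (volume : Measure (EuclideanSpace ℝ (Fin d)))) :
    Submodule.span ℂ (Set.range φ) →ₗ[ℂ] Submodule.span ℂ (Set.range φ) :=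
  LinearMap.id + (claimQ φ).comp ((claimR0 z hδ hδ2 𝓕).comp (Submodule.span ℂ (Set.range φ)).subtype)

lemma claimT_coe (z : ℂ) {δ : ℝ} (hδ : 0 < δ)
    (hδ2 : ∀ r : ℝ, 0 ≤ r → δ ≤ ‖(r : ℂ) - z‖)
    (𝓕 : Lp ℂ 2 (volume : Measure (EuclideanSpace ℝ (Fin d))) ≃ₗᵢ[ℂ]
         Lp ℂ 2 (volume : Measure (EuclideanSpace ℝ (Fin d))))
    {N : ℕ} (φ : Fin N → Lp ℂ 2 (volume : Measure (EuclideanSpace ℝ (Fin d))))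
    (x : Submodule.span ℂ (Set.range φ)) :
    (claimT z hδ hδ2 𝓕 φ x : Lp ℂ 2 (volume : Measure (EuclideanSpace ℝ (Fin d))))
      = (x : Lp ℂ 2 (volume : Measure (EuclideanSpace ℝ (Fin d))))
        + ∑ j, (inner ℂ (φ j) (claimR0 z hδ hδ2 𝓕
            (x : Lp ℂ 2 (volume : Measure (EuclideanSpace ℝ (Fin d))))) : ℂ) • φ j := by
  rw [claimT]
  simp only [LinearMap.add_apply, LinearMap.id_apply, LinearMap.comp_apply,
    Submodule.coe_add, Submodule.coe_subtype]
  rfl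

end ClaimOneSurj

/-- Claim 1 in the proof of Proposition 4.1 of the paper. The Fourier–Plancherel transform on
`L²(ℝ^d)` is encoded as a linear isometry equivalence `𝓕` that agrees a.e. with the integral
Fourier transform on `L¹ ∩ L²` (this characterizes it uniquely). The free resolvent
`R₀(z)` is the Fourier multiplier with symbol `(|ξ|² − z)⁻¹`, encoded relationally:
`v = R₀(z)u` iff `𝓕 v = (|ξ|² − z)⁻¹ 𝓕 u` a.e. The claim: on the span of an orthonormal family
`φ₁, …, φ_N`, the map `u ↦ u + P R₀(z) P u` (with `P` the orthogonal projection onto the span)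
is injective, hence a bijection of the span onto itself. -/
theorem claim_one_injectivity (d : ℕ) (hd : 1 ≤ d) (z : ℂ)
    (hz : ∀ r : ℝ, 0 ≤ r → z ≠ (r : ℂ))
    (𝓕 : Lp ℂ 2 (volume : Measure (EuclideanSpace ℝ (Fin d))) ≃ₗᵢ[ℂ]
         Lp ℂ 2 (volume : Measure (EuclideanSpace ℝ (Fin d))))
    (h𝓕 : ∀ (f : EuclideanSpace ℝ (Fin d) → ℂ) (hf1 : Integrable f volume)
      (hf2 : MemLp f 2 volume),
      (𝓕 (hf2.toLp f) : EuclideanSpace ℝ (Fin d) → ℂ) =ᵐ[volume] VectorFourier.fourierIntegral Real.fourierChar volume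
        (innerₗ (EuclideanSpace ℝ (Fin d))) f)
    (N : ℕ) (φ : Fin N → Lp ℂ 2 (volume : Measure (EuclideanSpace ℝ (Fin d))))
    (hφ : Orthonormal ℂ φ) :
    (∀ u v : Lp ℂ 2 (volume : Measure (EuclideanSpace ℝ (Fin d))),
      u ∈ Submodule.span ℂ (Set.range φ) →
      ((𝓕 v : EuclideanSpace ℝ (Fin d) → ℂ) =ᵐ[volume]
        fun ξ => (((‖ξ‖ ^ 2 : ℝ) : ℂ) - z)⁻¹ * (𝓕 u : EuclideanSpace ℝ (Fin d) → ℂ) ξ) →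
      u + ∑ j, (inner ℂ (φ j) v : ℂ) • φ j = 0 → u = 0) ∧
    (∀ w ∈ Submodule.span ℂ (Set.range φ),
      ∃ u ∈ Submodule.span ℂ (Set.range φ),
      ∃ v : Lp ℂ 2 (volume : Measure (EuclideanSpace ℝ (Fin d))),
        ((𝓕 v : EuclideanSpace ℝ (Fin d) → ℂ) =ᵐ[volume]
          fun ξ => (((‖ξ‖ ^ 2 : ℝ) : ℂ) - z)⁻¹ * (𝓕 u : EuclideanSpace ℝ (Fin d) → ℂ) ξ) ∧
        u + ∑ j, (inner ℂ (φ j) v : ℂ) • φ j = w) := by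
  classical
  obtain ⟨δ, hδ, hδ2⟩ := claim_one_exists_delta z hz
  constructor
  · intro u v hu hv heq
    exact claim_key_inj d z hz hδ hδ2 𝓕 N φ hφ u v hu hv heq
  · intro w hw
    haveI : FiniteDimensional ℂ (Submodule.span ℂ (Set.range φ)) :=
      FiniteDimensional.span_of_finite ℂ (Set.finite_range φ)
    have hTinj : Function.Injective (claimT z hδ hδ2 𝓕 φ) := by
      rw [← LinearMap.ker_eq_bot]
      apply LinearMap.ker_eq_bot'.mpr
      intro x hx
      have hx0 : (x : Lp ℂ 2 (volume : Measure (EuclideanSpace ℝ (Fin d))))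
          + ∑ j, (inner ℂ (φ j)
              (claimR0 z hδ hδ2 𝓕 (x : Lp ℂ 2 (volume : Measure (EuclideanSpace ℝ (Fin d))))) : ℂ)
            • φ j = 0 := by
        rw [← claimT_coe z hδ hδ2 𝓕 φ x, hx]
        simp
      have := claim_key_inj d z hz hδ hδ2 𝓕 N φ hφ
        (x : Lp ℂ 2 (volume : Measure (EuclideanSpace ℝ (Fin d))))
        (claimR0 z hδ hδ2 𝓕 (x : Lp ℂ 2 (volume : Measure (EuclideanSpace ℝ (Fin d)))))
        x.2 (claimR0_spec z hδ hδ2 𝓕 _) hx0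
      exact Subtype.ext this
    have hTsurj : Function.Surjective (claimT z hδ hδ2 𝓕 φ) :=
      LinearMap.injective_iff_surjective.mp hTinj
    obtain ⟨x, hx⟩ := hTsurj ⟨w, hw⟩
    refine ⟨(x : Lp ℂ 2 (volume : Measure (EuclideanSpace ℝ (Fin d)))), x.2,
      claimR0 z hδ hδ2 𝓕 (x : Lp ℂ 2 (volume : Measure (EuclideanSpace ℝ (Fin d)))),
      claimR0_spec z hδ hδ2 𝓕 _, ?_⟩
    have h2 := congrArg (Subtype.val) hx
    rw [claimT_coe z hδ hδ2 𝓕 φ x] at h2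
    exact h2
end

section
/- Let d ≥ 1, let z ∈ ℂ \ [0, ∞), and let R₀(z) : L²(ℝ^d) → L²(ℝ^d) be the bounded Fourier multiplier operator defined by 𝓕(R₀(z)f)(ξ) = (|ξ|² − z)^{−1} 𝓕f(ξ), where 𝓕 is the Fourier–Plancherel transform on L²(ℝ^d). Let φ₁, …, φ_N ∈ L²(ℝ^d) be an orthonormal family and P := Σ_{j=1}^N ⟨·, φ_j⟩ φ_j. Then the N × N complex matrix A(z) with entries a_{ij}(z) = δ_{ij} + ⟨R₀(z)φ_j, φ_i⟩ is invertible, and if G(z) = (g_{ij}(z)) denotes its inverse, then the bounded operator B(z)f := R₀(z)f − Σ_{i,j=1}^N g_{ij}(z) ⟨R₀(z)f, φ_j⟩ R₀(z)φ_i satisfies, for every f ∈ L²(ℝ^d): the function ξ ↦ (|ξ|² − z) 𝓕(B(z)f)(ξ) lies in L²(ℝ^d) and 𝓕^{−1}[(|ξ|² − z) 𝓕(B(z)f)] + P(B(z)f) = f; that is, B(z) is the resolvent (−Δ + P − z)^{−1} of the finite rank perturbation of the Laplacian. -/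
open MeasureTheory

section aux
variable {α : Type*} [MeasurableSpace α] {μ : Measure α}

lemma lp_coeFn_sum {ι : Type*} (s : Finset ι) (F : ι → Lp ℂ 2 μ) :
    (↑(∑ i ∈ s, F i) : α → ℂ) =ᵐ[μ] fun x => ∑ i ∈ s, (F i : α → ℂ) x := by
  classical
  induction s using Finset.cons_induction with
  | empty => simp only [Finset.sum_empty]; exact Lp.coeFn_zero ℂ 2 μ
  | cons i s hi ih =>
    rw [Finset.sum_cons]
    filter_upwards [Lp.coeFn_add (F i) (∑ j ∈ s, F j), ih] with x h1 h2
    simp only [Finset.sum_cons, h1, Pi.add_apply, h2]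

lemma lp_coeFn_sum_smul {N : ℕ} (c : Fin N → ℂ) (F : Fin N → Lp ℂ 2 μ) :
    (↑(∑ i, c i • F i) : α → ℂ) =ᵐ[μ] fun x => ∑ i, c i * (F i : α → ℂ) x := by
  have h2 : ∀ᵐ x ∂μ, ∀ i, (↑(c i • F i) : α → ℂ) x = c i * (F i : α → ℂ) x := by
    rw [ae_all_iff]
    intro i
    filter_upwards [Lp.coeFn_smul (c i) (F i)] with x hx
    simp [hx, smul_eq_mul]
  filter_upwards [lp_coeFn_sum Finset.univ (fun i => c i • F i), h2] with x e1 e2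
  rw [e1]
  exact Finset.sum_congr rfl fun i _ => e2 i

end aux

set_option maxHeartbeats 1000000

/-- The Aronszajn–Krein formula for finite rank perturbations (Proposition 4.1 of the paper,
formula (4.2)). The Fourier–Plancherel transform on `L²(ℝ^d)` is encoded as a linear isometry
equivalence `𝓕` agreeing a.e. with the integral Fourier transform on `L¹ ∩ L²` (this
characterizes it uniquely). The free resolvent `R₀(z)` is the Fourier multiplier with symbol
`(|ξ|² − z)⁻¹`, encoded relationally (`rφ j = R₀(z) φ_j` and `rf = R₀(z) f`). Conclusion:
the matrix `A(z)` with entries `δ_{ij} + ⟨R₀(z)φ_j, φ_i⟩` is invertible, and with `G = A(z)⁻¹`,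
the function `B(z)f = R₀(z)f − Σ_{i,j} g_{ij}(z) ⟨R₀(z)f, φ_j⟩ R₀(z)φ_i` satisfies
`(−Δ + P − z)(B(z)f) = f`, i.e. `ξ ↦ (|ξ|² − z) 𝓕(B(z)f)(ξ)` lies in `L²` and
`𝓕⁻¹[(|ξ|² − z) 𝓕(B(z)f)] + P(B(z)f) = f`. -/
theorem aronszajn_krein_finite_rank (d : ℕ) (hd : 1 ≤ d) (z : ℂ)
    (hz : ∀ r : ℝ, 0 ≤ r → z ≠ (r : ℂ))
    (𝓕 : Lp ℂ 2 (volume : Measure (EuclideanSpace ℝ (Fin d))) ≃ₗᵢ[ℂ]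
         Lp ℂ 2 (volume : Measure (EuclideanSpace ℝ (Fin d))))
    (h𝓕 : ∀ (f : EuclideanSpace ℝ (Fin d) → ℂ) (hf1 : Integrable f volume)
      (hf2 : MemLp f 2 volume),
      (𝓕 (hf2.toLp f) : EuclideanSpace ℝ (Fin d) → ℂ) =ᵐ[volume] FourierTransform.fourier f)
    (N : ℕ) (φ : Fin N → Lp ℂ 2 (volume : Measure (EuclideanSpace ℝ (Fin d))))
    (hφ : Orthonormal ℂ φ)
    (rφ : Fin N → Lp ℂ 2 (volume : Measure (EuclideanSpace ℝ (Fin d))))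
    (hrφ : ∀ j, (𝓕 (rφ j) : EuclideanSpace ℝ (Fin d) → ℂ) =ᵐ[volume]
      fun ξ => (((‖ξ‖ ^ 2 : ℝ) : ℂ) - z)⁻¹ * (𝓕 (φ j) : EuclideanSpace ℝ (Fin d) → ℂ) ξ) :
    ∃ G : Matrix (Fin N) (Fin N) ℂ,
      (Matrix.of fun i j => (if i = j then (1:ℂ) else 0) + (inner ℂ (φ i) (rφ j) : ℂ)) * G = 1 ∧
      G * (Matrix.of fun i j => (if i = j then (1:ℂ) else 0) + (inner ℂ (φ i) (rφ j) : ℂ)) = 1 ∧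
      ∀ f rf : Lp ℂ 2 (volume : Measure (EuclideanSpace ℝ (Fin d))),
        ((𝓕 rf : EuclideanSpace ℝ (Fin d) → ℂ) =ᵐ[volume]
          fun ξ => (((‖ξ‖ ^ 2 : ℝ) : ℂ) - z)⁻¹ * (𝓕 f : EuclideanSpace ℝ (Fin d) → ℂ) ξ) →
        ∀ B : Lp ℂ 2 (volume : Measure (EuclideanSpace ℝ (Fin d))),
          B = rf - ∑ i, ∑ j, (G i j * (inner ℂ (φ j) rf : ℂ)) • rφ i →
          ∃ hg : MemLp (fun ξ => (((‖ξ‖ ^ 2 : ℝ) : ℂ) - z) *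
              (𝓕 B : EuclideanSpace ℝ (Fin d) → ℂ) ξ) 2 volume,
            𝓕.symm (hg.toLp _) + ∑ j, (inner ℂ (φ j) B : ℂ) • φ j = f := by
  classical
  have hne : ∀ ξ : EuclideanSpace ℝ (Fin d), (((‖ξ‖ ^ 2 : ℝ) : ℂ) - z) ≠ 0 := by
    intro ξ h
    exact hz (‖ξ‖ ^ 2) (sq_nonneg _) (sub_eq_zero.mp h).symm
  set A : Matrix (Fin N) (Fin N) ℂ :=
    Matrix.of fun i j => (if i = j then (1:ℂ) else 0) + (inner ℂ (φ i) (rφ j) : ℂ) with hA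
  -- Step 1: the matrix `A` has trivial kernel.
  have key : ∀ x : Fin N → ℂ, A.mulVec x = 0 → x = 0 := by
    intro x hx
    set u : Lp ℂ 2 (volume : Measure (EuclideanSpace ℝ (Fin d))) := ∑ j, x j • rφ j with hu
    set ψ : Lp ℂ 2 (volume : Measure (EuclideanSpace ℝ (Fin d))) := ∑ j, x j • φ j with hψ
    have hxi : ∀ i, x i = - (inner ℂ (φ i) u : ℂ) := by
      intro i
      have h0 : A.mulVec x i = 0 := congrFun hx i
      have h1 : A.mulVec x i = x i + (inner ℂ (φ i) u : ℂ) := by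
        simp only [Matrix.mulVec, dotProduct, hA, Matrix.of_apply, add_mul, ite_mul,
          one_mul, zero_mul, Finset.sum_add_distrib, Finset.sum_ite_eq, Finset.mem_univ, if_true,
          hu, inner_sum, inner_smul_right]
        congr 1
        exact Finset.sum_congr rfl fun j _ => mul_comm _ _
      rw [h1] at h0
      linear_combination h0
    have hFu : (↑(𝓕 u) : EuclideanSpace ℝ (Fin d) → ℂ) =ᵐ[volume]
        fun ξ => (((‖ξ‖ ^ 2 : ℝ) : ℂ) - z)⁻¹ * (𝓕 ψ : EuclideanSpace ℝ (Fin d) → ℂ) ξ := by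
      have e1 : 𝓕 u = ∑ j, x j • 𝓕 (rφ j) := by rw [hu, map_sum]; simp
      have e2 : 𝓕 ψ = ∑ j, x j • 𝓕 (φ j) := by rw [hψ, map_sum]; simp
      have h1 := lp_coeFn_sum_smul x (fun j => 𝓕 (rφ j))
      have h2 := lp_coeFn_sum_smul x (fun j => 𝓕 (φ j))
      rw [← e1] at h1; rw [← e2] at h2
      have h3 : ∀ᵐ ξ ∂(volume : Measure (EuclideanSpace ℝ (Fin d))), ∀ j,
          (𝓕 (rφ j) : EuclideanSpace ℝ (Fin d) → ℂ) ξ =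
            (((‖ξ‖ ^ 2 : ℝ) : ℂ) - z)⁻¹ * (𝓕 (φ j) : EuclideanSpace ℝ (Fin d) → ℂ) ξ :=
        ae_all_iff.mpr hrφ
      filter_upwards [h1, h2, h3] with ξ e1' e2' e3'
      rw [e1', e2', Finset.mul_sum]
      exact Finset.sum_congr rfl fun j _ => by rw [e3' j]; ring
    have hψu : (↑(𝓕 ψ) : EuclideanSpace ℝ (Fin d) → ℂ) =ᵐ[volume]
        fun ξ => (((‖ξ‖ ^ 2 : ℝ) : ℂ) - z) * (𝓕 u : EuclideanSpace ℝ (Fin d) → ℂ) ξ := by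
      filter_upwards [hFu] with ξ e
      rw [e, ← mul_assoc, mul_inv_cancel₀ (hne ξ), one_mul]
    have hint : (fun ξ => (inner ℂ ((𝓕 u : EuclideanSpace ℝ (Fin d) → ℂ) ξ)
          ((𝓕 ψ : EuclideanSpace ℝ (Fin d) → ℂ) ξ) : ℂ)) =ᵐ[volume]
        fun ξ => (((‖ξ‖ ^ 2 : ℝ) : ℂ) - z) *
          ((‖(𝓕 u : EuclideanSpace ℝ (Fin d) → ℂ) ξ‖ ^ 2 : ℝ) : ℂ) := by
      filter_upwards [hψu] with ξ e
      rw [RCLike.inner_apply, e, mul_assoc, RCLike.mul_conj]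
      norm_cast
    have hintg : Integrable (fun ξ => (((‖ξ‖ ^ 2 : ℝ) : ℂ) - z) *
        ((‖(𝓕 u : EuclideanSpace ℝ (Fin d) → ℂ) ξ‖ ^ 2 : ℝ) : ℂ)) volume :=
      (L2.integrable_inner (𝓕 u) (𝓕 ψ)).congr hint
    have hIeq : ∫ ξ, (((‖ξ‖ ^ 2 : ℝ) : ℂ) - z) *
        ((‖(𝓕 u : EuclideanSpace ℝ (Fin d) → ℂ) ξ‖ ^ 2 : ℝ) : ℂ) ∂volume
        = ((- ∑ i, ‖x i‖ ^ 2 : ℝ) : ℂ) := by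
      have hI : (inner ℂ u ψ : ℂ) = ∫ ξ, (((‖ξ‖ ^ 2 : ℝ) : ℂ) - z) *
          ((‖(𝓕 u : EuclideanSpace ℝ (Fin d) → ℂ) ξ‖ ^ 2 : ℝ) : ℂ) ∂volume := by
        rw [← 𝓕.inner_map_map u ψ, L2.inner_def]
        exact integral_congr_ae hint
      rw [← hI, hψ, inner_sum]
      have h4 : ∀ i, (inner ℂ u (φ i) : ℂ) = - (starRingEnd ℂ) (x i) := by
        intro i
        have hxn : (inner ℂ (φ i) u : ℂ) = - x i := by rw [hxi i, neg_neg]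
        rw [← inner_conj_symm, hxn, map_neg]
      simp only [inner_smul_right, h4, mul_neg]
      push_cast
      rw [← Finset.sum_neg_distrib]
      exact Finset.sum_congr rfl fun i _ => by rw [RCLike.mul_conj]; norm_cast
    by_cases him : z.im = 0
    · -- z is a negative real number
      have hre : z.re < 0 := by
        by_contra h
        push_neg at h
        exact hz z.re h (Complex.ext (Complex.ofReal_re z.re).symm
          (by simp [him]))
      have h6 : ∫ ξ, (‖ξ‖ ^ 2 - z.re) * ‖(𝓕 u : EuclideanSpace ℝ (Fin d) → ℂ) ξ‖ ^ 2 ∂volume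
          = - ∑ i, ‖x i‖ ^ 2 := by
        have := integral_re hintg
        rw [hIeq, RCLike.re_to_complex, Complex.ofReal_re] at this
        rw [← this]
        apply integral_congr_ae
        refine Filter.Eventually.of_forall fun ξ => ?_
        simp only [RCLike.re_to_complex, Complex.mul_re, Complex.sub_re, Complex.sub_im,
          Complex.ofReal_re, Complex.ofReal_im, him]
        ring
      have hge : 0 ≤ ∫ ξ, (‖ξ‖ ^ 2 - z.re) * ‖(𝓕 u : EuclideanSpace ℝ (Fin d) → ℂ) ξ‖ ^ 2 ∂volume :=
        integral_nonneg fun ξ => mul_nonneg (by nlinarith [sq_nonneg ‖ξ‖]) (sq_nonneg _)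
      have hS : ∑ i, ‖x i‖ ^ 2 = 0 :=
        le_antisymm (by linarith) (Finset.sum_nonneg fun i _ => sq_nonneg _)
      funext i
      have hxi0 := (Finset.sum_eq_zero_iff_of_nonneg
        (fun i _ => sq_nonneg ‖x i‖)).mp hS i (Finset.mem_univ i)
      have : ‖x i‖ = 0 := by
        have := sq_eq_zero_iff.mp hxi0
        exact this
      simpa using norm_eq_zero.mp this
    · -- z has nonzero imaginary part
      have hTint : Integrable
          (fun ξ => ‖(𝓕 u : EuclideanSpace ℝ (Fin d) → ℂ) ξ‖ ^ 2) volume := by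
        have h := (L2.integrable_inner (𝕜 := ℂ) (𝓕 u) (𝓕 u)).re
        refine h.congr (Filter.Eventually.of_forall fun ξ => ?_)
        exact inner_self_eq_norm_sq (𝕜 := ℂ) _
      have h6 : ∫ ξ, (- z.im) * ‖(𝓕 u : EuclideanSpace ℝ (Fin d) → ℂ) ξ‖ ^ 2 ∂volume = 0 := by
        have := integral_im hintg
        rw [hIeq, RCLike.im_to_complex, Complex.ofReal_im] at this
        rw [← this]
        apply integral_congr_ae
        refine Filter.Eventually.of_forall fun ξ => ?_
        simp only [RCLike.im_to_complex, Complex.mul_im, Complex.sub_re, Complex.sub_im,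
          Complex.ofReal_re, Complex.ofReal_im]
        ring
      rw [integral_const_mul] at h6
      have h7 : ∫ ξ, ‖(𝓕 u : EuclideanSpace ℝ (Fin d) → ℂ) ξ‖ ^ 2 ∂volume = 0 :=
        (mul_eq_zero.mp h6).resolve_left (by simpa using him)
      have h8 : (fun ξ => ‖(𝓕 u : EuclideanSpace ℝ (Fin d) → ℂ) ξ‖ ^ 2) =ᵐ[volume] 0 :=
        (integral_eq_zero_iff_of_nonneg (fun ξ => sq_nonneg _) hTint).mp h7
      have h9 : u = 0 := by
        have h𝓕u : 𝓕 u = 0 := by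
          refine Lp.ext (((?_ : (↑(𝓕 u) : EuclideanSpace ℝ (Fin d) → ℂ) =ᵐ[volume] 0).trans
            (Lp.coeFn_zero ℂ 2 volume).symm))
          filter_upwards [h8] with ξ e
          have : ‖(𝓕 u : EuclideanSpace ℝ (Fin d) → ℂ) ξ‖ = 0 := by
            have := sq_eq_zero_iff.mp e
            exact this
          simpa using norm_eq_zero.mp this
        have : 𝓕 u = 𝓕 0 := by rw [h𝓕u, map_zero]
        exact 𝓕.injective this
      funext i
      rw [Pi.zero_apply, hxi i, h9, inner_zero_right, neg_zero]
  -- Step 2: invertibility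
  have hdet : A.det ≠ 0 := by
    intro h
    obtain ⟨v0, hv0, hv⟩ := (Matrix.exists_mulVec_eq_zero_iff).mpr h
    exact hv0 (key v0 hv)
  have hunit : IsUnit A.det := isUnit_iff_ne_zero.mpr hdet
  have hAG : A * A⁻¹ = 1 := Matrix.mul_nonsing_inv A hunit
  refine ⟨A⁻¹, hAG, Matrix.nonsing_inv_mul A hunit, ?_⟩
  intro f rf hrf B hB
  set c : Fin N → ℂ := fun i => ∑ j, A⁻¹ i j * (inner ℂ (φ j) rf : ℂ) with hc
  have hB' : B = rf - ∑ i, c i • rφ i := by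
    rw [hB]
    congr 1
    exact Finset.sum_congr rfl fun i _ => (Finset.sum_smul).symm
  set w : Lp ℂ 2 (volume : Measure (EuclideanSpace ℝ (Fin d))) := ∑ i, c i • φ i with hw
  have hFB : (↑(𝓕 B) : EuclideanSpace ℝ (Fin d) → ℂ) =ᵐ[volume]
      fun ξ => (((‖ξ‖ ^ 2 : ℝ) : ℂ) - z)⁻¹ * (𝓕 (f - w) : EuclideanSpace ℝ (Fin d) → ℂ) ξ := by
    have e1 : 𝓕 B = 𝓕 rf - ∑ i, c i • 𝓕 (rφ i) := by rw [hB']; simp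
    have e2 : 𝓕 (f - w) = 𝓕 f - ∑ i, c i • 𝓕 (φ i) := by rw [hw]; simp
    have h1 : (↑(𝓕 B) : EuclideanSpace ℝ (Fin d) → ℂ) =ᵐ[volume]
        fun ξ => (𝓕 rf : EuclideanSpace ℝ (Fin d) → ℂ) ξ -
          ∑ i, c i * (𝓕 (rφ i) : EuclideanSpace ℝ (Fin d) → ℂ) ξ := by
      rw [e1]
      filter_upwards [Lp.coeFn_sub (𝓕 rf) (∑ i, c i • 𝓕 (rφ i)),
        lp_coeFn_sum_smul c (fun i => 𝓕 (rφ i))] with ξ a b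
      rw [a, Pi.sub_apply, b]
    have h2 : (↑(𝓕 (f - w)) : EuclideanSpace ℝ (Fin d) → ℂ) =ᵐ[volume]
        fun ξ => (𝓕 f : EuclideanSpace ℝ (Fin d) → ℂ) ξ -
          ∑ i, c i * (𝓕 (φ i) : EuclideanSpace ℝ (Fin d) → ℂ) ξ := by
      rw [e2]
      filter_upwards [Lp.coeFn_sub (𝓕 f) (∑ i, c i • 𝓕 (φ i)),
        lp_coeFn_sum_smul c (fun i => 𝓕 (φ i))] with ξ a b
      rw [a, Pi.sub_apply, b]
    have h3 : ∀ᵐ ξ ∂(volume : Measure (EuclideanSpace ℝ (Fin d))), ∀ i,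
        (𝓕 (rφ i) : EuclideanSpace ℝ (Fin d) → ℂ) ξ =
          (((‖ξ‖ ^ 2 : ℝ) : ℂ) - z)⁻¹ * (𝓕 (φ i) : EuclideanSpace ℝ (Fin d) → ℂ) ξ :=
      ae_all_iff.mpr hrφ
    filter_upwards [h1, h2, hrf, h3] with ξ a b e hall
    rw [a, b, e, mul_sub, Finset.mul_sum]
    congr 1
    exact Finset.sum_congr rfl fun i _ => by rw [hall i]; ring
  have hgfun : (fun ξ => (((‖ξ‖ ^ 2 : ℝ) : ℂ) - z) *
      (𝓕 B : EuclideanSpace ℝ (Fin d) → ℂ) ξ) =ᵐ[volume]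
      (↑(𝓕 (f - w)) : EuclideanSpace ℝ (Fin d) → ℂ) := by
    filter_upwards [hFB] with ξ e
    rw [e, ← mul_assoc, mul_inv_cancel₀ (hne ξ), one_mul]
  have hg : MemLp (fun ξ => (((‖ξ‖ ^ 2 : ℝ) : ℂ) - z) *
      (𝓕 B : EuclideanSpace ℝ (Fin d) → ℂ) ξ) 2 volume :=
    (Lp.memLp (𝓕 (f - w))).ae_eq hgfun.symm
  refine ⟨hg, ?_⟩
  have htoLp : hg.toLp _ = 𝓕 (f - w) := Lp.ext (hg.coeFn_toLp.trans hgfun)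
  rw [htoLp, LinearIsometryEquiv.symm_apply_apply]
  have hcoef : ∀ k, (inner ℂ (φ k) B : ℂ) = c k := by
    intro k
    have h1 : (inner ℂ (φ k) B : ℂ) =
        (inner ℂ (φ k) rf : ℂ) - ∑ i, c i * (inner ℂ (φ k) (rφ i) : ℂ) := by
      rw [hB', inner_sub_right, inner_sum]
      simp only [inner_smul_right]
    have h2 : ∀ i, (inner ℂ (φ k) (rφ i) : ℂ) = A k i - (if k = i then 1 else 0) := by
      intro i; simp [hA]
    have h3 : ∑ i, A k i * c i = (inner ℂ (φ k) rf : ℂ) := by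
      calc ∑ i, A k i * c i = ∑ j, (∑ i, A k i * A⁻¹ i j) * (inner ℂ (φ j) rf : ℂ) := by
            rw [Finset.sum_congr rfl fun i (_ : i ∈ Finset.univ) =>
              (Finset.mul_sum (Finset.univ) (fun j => A⁻¹ i j * (inner ℂ (φ j) rf : ℂ)) (A k i)),
              Finset.sum_comm]
            exact Finset.sum_congr rfl fun j _ => by
              rw [Finset.sum_mul]
              exact Finset.sum_congr rfl fun i _ => (mul_assoc _ _ _).symm
        _ = ∑ j, (1 : Matrix (Fin N) (Fin N) ℂ) k j * (inner ℂ (φ j) rf : ℂ) := by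
            refine Finset.sum_congr rfl fun j _ => ?_
            rw [← Matrix.mul_apply, hAG]
        _ = (inner ℂ (φ k) rf : ℂ) := by simp [Matrix.one_apply]
    have h4 : ∑ i, c i * (inner ℂ (φ k) (rφ i) : ℂ) = (∑ i, A k i * c i) - c k := by
      have hterm : ∀ i, c i * (inner ℂ (φ k) (rφ i) : ℂ)
          = A k i * c i - (if k = i then c i else 0) := by
        intro i
        rw [h2 i]
        by_cases hki : k = i <;> simp [hki] <;> ring
      rw [Finset.sum_congr rfl fun i _ => hterm i, Finset.sum_sub_distrib,
        Finset.sum_ite_eq, if_pos (Finset.mem_univ k)]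
    rw [h1, h4, h3]
    ring
  have hsum : ∑ j, (inner ℂ (φ j) B : ℂ) • φ j = w := by
    rw [hw]
    exact Finset.sum_congr rfl fun j _ => by rw [hcoef j]
  rw [hsum]
  abel
end
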